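/- arXiv:2302.03121 — 14 statements merged into one kernel-verified Lean document; each statement's English description precedes it below -/
import Mathlib

section
/- Let G and H be finite abelian groups and F : G → H a perfect nonlinear function. Then the sum over all β ∈ H of |F⁻¹(β)|² equals |G| + (|G|/|H|)·(|G|−1). -/
/-- Value distribution identity for perfect nonlinear functions:
`∑_{β ∈ H} |F⁻¹(β)|² = |G| + (|G|/|H|)(|G|−1)`. -/
theorem sum_sq_preimages_of_perfect_nonlinear
    {G H : Type*} [AddCommGroup G] [Fintype G]
    [AddCommGroup H] [Fintype H] [DecidableEq H] (F : G → H)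
    (hPN : ∀ a : G, a ≠ 0 → ∀ b : H,
      (Finset.univ.filter fun x => F (x + a) - F x = b).card * Fintype.card H
        = Fintype.card G) :
    (∑ β : H, ((Finset.univ.filter fun x => F x = β).card : ℚ) ^ 2)
      = (Fintype.card G : ℚ)
        + ((Fintype.card G : ℚ) / (Fintype.card H : ℚ)) * ((Fintype.card G : ℚ) - 1) := by
  classical
  have hHne : (Fintype.card H : ℚ) ≠ 0 :=
    Nat.cast_ne_zero.mpr Fintype.card_ne_zero
  -- Step 1: the sum of squares equals ∑_x |{y : F y = F x}|
  have step1 : (∑ β : H, ((Finset.univ.filter fun x => F x = β).card : ℚ) ^ 2)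
      = ∑ x : G, ((Finset.univ.filter fun y => F y = F x).card : ℚ) := by
    rw [← Finset.sum_fiberwise Finset.univ F
      (fun x => ((Finset.univ.filter fun y => F y = F x).card : ℚ))]
    refine Finset.sum_congr rfl fun β _ => ?_
    have hcongr : ∀ x ∈ Finset.univ.filter fun x => F x = β,
        ((Finset.univ.filter fun y => F y = F x).card : ℚ)
          = ((Finset.univ.filter fun y => F y = β).card : ℚ) := by
      intro x hx
      rw [(Finset.mem_filter.mp hx).2]
    rw [Finset.sum_congr rfl hcongr, Finset.sum_const, sq, nsmul_eq_mul]
  -- Step 2: reindex y = x + a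
  have step2 : ∀ x : G, (Finset.univ.filter fun y => F y = F x).card
      = (Finset.univ.filter fun a => F (x + a) = F x).card := by
    intro x
    apply Finset.card_bij (fun y _ => y - x)
    · intro y hy
      simp only [Finset.mem_filter, Finset.mem_univ, true_and] at hy ⊢
      simpa using hy
    · intro a _ b _ h
      exact sub_left_inj.mp h
    · intro a ha
      simp only [Finset.mem_filter, Finset.mem_univ, true_and] at ha ⊢
      exact ⟨x + a, ha, by simp⟩
  -- Step 3: swap sums
  have step3 : (∑ x : G, ((Finset.univ.filter fun a => F (x + a) = F x).card : ℚ))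
      = ∑ a : G, ((Finset.univ.filter fun x => F (x + a) = F x).card : ℚ) := by
    simp only [Finset.card_filter]
    push_cast
    rw [Finset.sum_comm]
  -- Count for a ≠ 0
  have hcount : ∀ a : G, a ≠ 0 →
      ((Finset.univ.filter fun x => F (x + a) = F x).card : ℚ)
        = (Fintype.card G : ℚ) / (Fintype.card H : ℚ) := by
    intro a ha
    have h := hPN a ha 0
    have hset : (Finset.univ.filter fun x => F (x + a) - F x = 0)
        = (Finset.univ.filter fun x => F (x + a) = F x) := by
      apply Finset.filter_congr
      intro x _
      simp [sub_eq_zero]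
    rw [hset] at h
    field_simp
    exact_mod_cast h
  rw [step1]
  rw [Finset.sum_congr rfl (fun x _ => by rw [step2 x])]
  rw [step3]
  rw [← Finset.add_sum_erase Finset.univ _ (Finset.mem_univ (0 : G))]
  have h0 : ((Finset.univ.filter fun x => F (x + (0:G)) = F x).card : ℚ)
      = (Fintype.card G : ℚ) := by
    simp
  rw [h0]
  congr 1
  rw [Finset.sum_congr rfl (fun a ha => hcount a (Finset.ne_of_mem_erase ha))]
  rw [Finset.sum_const, Finset.card_erase_of_mem (Finset.mem_univ 0), Finset.card_univ]
  have hG1 : 1 ≤ Fintype.card G := Fintype.card_pos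
  rw [nsmul_eq_mul]
  push_cast [Nat.cast_sub hG1]
  ring
end

section
/- Let G and H be finite abelian groups and F : G → H a perfect nonlinear function. Then for every β ∈ H, |G|/|H| − √|G| + √|G|/|H| ≤ |F⁻¹(β)| ≤ |G|/|H| + √|G| − √|G|/|H|. -/
open Finset

/-- Bounds on the preimage set sizes of perfect nonlinear functions. -/
theorem preimage_card_bounds_of_perfect_nonlinear
    {G H : Type*} [AddCommGroup G] [Fintype G]
    [AddCommGroup H] [Fintype H] [DecidableEq H] (F : G → H)
    (hPN : ∀ a : G, a ≠ 0 → ∀ b : H,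
      (Finset.univ.filter fun x => F (x + a) - F x = b).card * Fintype.card H
        = Fintype.card G) :
    ∀ β : H,
      (Fintype.card G : ℝ) / (Fintype.card H : ℝ) - Real.sqrt (Fintype.card G)
          + Real.sqrt (Fintype.card G) / (Fintype.card H : ℝ)
        ≤ ((Finset.univ.filter fun x => F x = β).card : ℝ) ∧
      ((Finset.univ.filter fun x => F x = β).card : ℝ)
        ≤ (Fintype.card G : ℝ) / (Fintype.card H : ℝ) + Real.sqrt (Fintype.card G)
          - Real.sqrt (Fintype.card G) / (Fintype.card H : ℝ) := by
  classical
  intro β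
  set q : ℕ := Fintype.card G with hq
  set h : ℕ := Fintype.card H with hh
  have hhpos : 0 < h := Fintype.card_pos
  have hqpos : 0 < q := Fintype.card_pos
  set n : ℕ := (Finset.univ.filter fun x => F x = β).card with hn
  set S : AddChar H ℂ → ℂ := fun ψ => ∑ x : G, ψ (F x) with hSdef
  -- Step 1: for nontrivial ψ, ‖S ψ‖ = √q
  have key : ∀ ψ : AddChar H ℂ, ψ ≠ 0 → ‖S ψ‖ = Real.sqrt q := by
    intro ψ hψ
    have h1 : S ψ * (starRingEnd ℂ) (S ψ) = ∑ y : G, ∑ x : G, ψ (F x - F y) := by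
      rw [hSdef]
      rw [map_sum, Finset.sum_mul_sum, Finset.sum_comm]
      refine Finset.sum_congr rfl fun y _ => Finset.sum_congr rfl fun x _ => ?_
      rw [← AddChar.map_neg_eq_conj, ← AddChar.map_add_eq_mul, sub_eq_add_neg]
    have h2 : ∀ y : G, ∑ x : G, ψ (F x - F y) = ∑ a : G, ψ (F (y + a) - F y) := by
      intro y
      exact (Fintype.sum_equiv (Equiv.addLeft y) _ _ (fun a => by simp)).symm
    have h3 : ∀ a : G, a ≠ 0 → ∑ y : G, ψ (F (y + a) - F y) = 0 := by
      intro a ha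
      have := Finset.sum_fiberwise' Finset.univ (fun y => F (y + a) - F y)
        (fun b => ψ b)
      rw [← this]
      have hconst : ∀ b : H,
          (Finset.univ.filter fun y => F (y + a) - F y = b).card = q / h := by
        intro b
        exact (Nat.div_eq_of_eq_mul_left hhpos (hPN a ha b).symm).symm
      calc ∑ b : H, ∑ _y ∈ Finset.univ.filter fun y => F (y + a) - F y = b, ψ b
          = ∑ b : H, ((q / h : ℕ) : ℂ) * ψ b := by
            refine Finset.sum_congr rfl fun b _ => ?_
            rw [Finset.sum_const, hconst b, nsmul_eq_mul]
        _ = ((q / h : ℕ) : ℂ) * ∑ b : H, ψ b := by rw [Finset.mul_sum]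
        _ = 0 := by rw [AddChar.sum_eq_zero_iff_ne_zero.2 hψ, mul_zero]
    have h4 : S ψ * (starRingEnd ℂ) (S ψ) = (q : ℂ) := by
      rw [h1]
      rw [Finset.sum_congr rfl fun y _ => h2 y, Finset.sum_comm]
      rw [Fintype.sum_eq_single (0 : G) h3]
      simp [hq]
    have h5 : Complex.normSq (S ψ) = (q : ℝ) := by
      have := h4
      rw [Complex.mul_conj] at this
      exact_mod_cast this
    rw [Complex.norm_def, h5]
  -- Step 2: (h : ℂ) * n = ∑ ψ, ψ (-β) * S ψ
  have step2 : ((h : ℂ)) * n = ∑ ψ : AddChar H ℂ, ψ (-β) * S ψ := by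
    have : ∀ ψ : AddChar H ℂ, ψ (-β) * S ψ = ∑ x : G, ψ (F x - β) := by
      intro ψ
      rw [hSdef, Finset.mul_sum]
      refine Finset.sum_congr rfl fun x _ => ?_
      rw [← AddChar.map_add_eq_mul, sub_eq_add_neg, add_comm]
    rw [Finset.sum_congr rfl fun ψ _ => this ψ, Finset.sum_comm]
    have : ∀ x : G, ∑ ψ : AddChar H ℂ, ψ (F x - β)
        = if F x = β then (h : ℂ) else 0 := by
      intro x
      rw [AddChar.sum_apply_eq_ite]
      simp [sub_eq_zero, hh]
    rw [Finset.sum_congr rfl fun x _ => this x, Finset.sum_ite, Finset.sum_const,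
      Finset.sum_const_zero, add_zero, nsmul_eq_mul, hn, mul_comm]
  -- split off trivial character
  have hS0 : S 0 = (q : ℂ) := by simp [hSdef, hq]
  have step3 : ((h : ℂ)) * n - q = ∑ ψ ∈ Finset.univ.erase (0 : AddChar H ℂ),
      ψ (-β) * S ψ := by
    rw [step2, ← Finset.add_sum_erase _ _ (Finset.mem_univ (0 : AddChar H ℂ))]
    simp [hS0]
  -- norm bound
  have hbound : ‖((h : ℂ)) * n - q‖ ≤ ((h : ℝ) - 1) * Real.sqrt q := by
    rw [step3]
    calc ‖∑ ψ ∈ Finset.univ.erase (0 : AddChar H ℂ), ψ (-β) * S ψ‖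
        ≤ ∑ ψ ∈ Finset.univ.erase (0 : AddChar H ℂ), ‖ψ (-β) * S ψ‖ :=
          norm_sum_le _ _
      _ = ∑ ψ ∈ Finset.univ.erase (0 : AddChar H ℂ), Real.sqrt q := by
          refine Finset.sum_congr rfl fun ψ hψ => ?_
          rw [norm_mul, AddChar.norm_apply, one_mul,
            key ψ (Finset.ne_of_mem_erase hψ)]
      _ = ((h : ℝ) - 1) * Real.sqrt q := by
          rw [Finset.sum_const, Finset.card_erase_of_mem (Finset.mem_univ _),
            Finset.card_univ, AddChar.card_eq, nsmul_eq_mul, ← hh,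
            Nat.cast_sub hhpos]
          push_cast
          ring
  -- transfer to ℝ
  have hreal : |(h : ℝ) * n - q| ≤ ((h : ℝ) - 1) * Real.sqrt q := by
    have : ((h : ℂ)) * n - q = (((h : ℝ) * n - q : ℝ) : ℂ) := by push_cast; ring
    rw [this, Complex.norm_real, Real.norm_eq_abs] at hbound
    exact hbound
  rw [abs_le] at hreal
  have hhR : (0 : ℝ) < (h : ℝ) := by exact_mod_cast hhpos
  constructor
  · rw [show (q : ℝ) / h - Real.sqrt q + Real.sqrt q / h
        = ((q : ℝ) - ((h : ℝ) - 1) * Real.sqrt q) / h by field_simp; ring,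
      div_le_iff₀ hhR]
    nlinarith [hreal.1]
  · rw [show (q : ℝ) / h + Real.sqrt q - Real.sqrt q / h
        = ((q : ℝ) + ((h : ℝ) - 1) * Real.sqrt q) / h by field_simp; ring,
      le_div_iff₀ hhR]
    nlinarith [hreal.2]
end

section
/- Let G and H be finite abelian groups and F : G → H perfect nonlinear. If some α ∈ H satisfies |F⁻¹(α)| = |G|/|H| + √|G| − √|G|/|H|, then |F⁻¹(β)| = |G|/|H| − √|G|/|H| for every β ≠ α. -/
open Finset

/-- If a preimage attains the maximal possible size, all other preimages are uniform. -/
theorem preimage_uniform_of_max_preimage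
    {G H : Type*} [AddCommGroup G] [Fintype G]
    [AddCommGroup H] [Fintype H] [DecidableEq H] (F : G → H)
    (hPN : ∀ a : G, a ≠ 0 → ∀ b : H,
      (Finset.univ.filter fun x => F (x + a) - F x = b).card * Fintype.card H
        = Fintype.card G)
    (α : H)
    (hα : ((Finset.univ.filter fun x => F x = α).card : ℝ)
        = (Fintype.card G : ℝ) / (Fintype.card H : ℝ) + Real.sqrt (Fintype.card G)
          - Real.sqrt (Fintype.card G) / (Fintype.card H : ℝ)) :
    ∀ β : H, β ≠ α →
      ((Finset.univ.filter fun x => F x = β).card : ℝ)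
        = (Fintype.card G : ℝ) / (Fintype.card H : ℝ)
          - Real.sqrt (Fintype.card G) / (Fintype.card H : ℝ) := by
  classical
  intro β hβ
  set N : H → ℕ := fun b => (univ.filter fun x => F x = b).card with hN
  have hsumN : ∑ b : H, N b = Fintype.card G := by
    rw [← Finset.card_univ, Finset.card_eq_sum_card_fiberwise (f := F) (t := univ)
      (fun x _ => mem_univ _)]
  have hkey : ∑ b : H, (N b)^2 = ∑ a : G, (univ.filter fun x => F (x + a) = F x).card := by
    have h1 : (univ.filter fun p : G × G => F p.1 = F p.2).card = ∑ b : H, (N b)^2 := by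
      rw [Finset.card_eq_sum_card_fiberwise (f := fun p => F p.1) (t := univ)
        (fun p _ => mem_univ _)]
      refine Finset.sum_congr rfl fun b _ => ?_
      have hfe : (univ.filter fun p : G × G => F p.1 = F p.2).filter (fun p => F p.1 = b)
          = (univ.filter fun x => F x = b) ×ˢ (univ.filter fun x => F x = b) := by
        ext ⟨x, y⟩
        simp only [mem_filter, mem_univ, true_and, mem_product]
        constructor
        · rintro ⟨h1, h2⟩; exact ⟨h2, h2 ▸ h1.symm⟩
        · rintro ⟨h1, h2⟩; exact ⟨h1.trans h2.symm, h1⟩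
      rw [hfe, Finset.card_product, sq]
    have h2 : (univ.filter fun p : G × G => F p.1 = F p.2).card
        = (univ.filter fun p : G × G => F (p.1 + p.2) = F p.1).card := by
      refine Finset.card_nbij' (fun p => (p.1, p.2 - p.1)) (fun p => (p.1, p.1 + p.2))
        ?_ ?_ ?_ ?_
      · intro ⟨x, y⟩ hp
        simp only [mem_coe, mem_filter, mem_univ, true_and] at hp ⊢
        rw [add_sub_cancel]; exact hp.symm
      · intro ⟨x, y⟩ hp
        simp only [mem_coe, mem_filter, mem_univ, true_and] at hp ⊢
        exact hp.symm
      · intro ⟨x, y⟩ _; simp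
      · intro ⟨x, y⟩ _; simp
    have h3 : (univ.filter fun p : G × G => F (p.1 + p.2) = F p.1).card
        = ∑ a : G, (univ.filter fun x => F (x + a) = F x).card := by
      rw [Finset.card_eq_sum_card_fiberwise (f := fun p => p.2) (t := univ)
        (fun p _ => mem_univ _)]
      refine Finset.sum_congr rfl fun a _ => ?_
      refine Finset.card_nbij' (fun p => p.1) (fun x => (x, a)) ?_ ?_ ?_ ?_
      · intro ⟨x, y⟩ hp
        simp only [mem_coe, mem_filter, mem_univ, true_and] at hp ⊢
        obtain ⟨h1, h2⟩ := hp
        rw [← h2]; exact h1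
      · intro x hx
        simp only [mem_coe, mem_filter, mem_univ, true_and] at hx ⊢
        exact ⟨hx, trivial⟩
      · intro ⟨x, y⟩ hp
        simp only [mem_coe, mem_filter, mem_univ, true_and] at hp
        simp [hp.2]
      · intro x _; rfl
    rw [← h1, h2, h3]
  have hm : 0 < Fintype.card H := Fintype.card_pos
  have hg : 0 < Fintype.card G := Fintype.card_pos
  have hsq : (∑ b : H, (N b)^2) * Fintype.card H
      = Fintype.card G * Fintype.card H + (Fintype.card G - 1) * Fintype.card G := by
    rw [hkey, Finset.sum_mul]
    rw [← Finset.add_sum_erase _ _ (mem_univ (0 : G))]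
    have h0 : (univ.filter fun x => F (x + 0) = F x) = univ := by
      refine Finset.filter_true_of_mem fun x _ => by rw [add_zero]
    rw [h0, Finset.card_univ]
    congr 1
    rw [Finset.sum_congr rfl (fun a ha => ?_), Finset.sum_const, Finset.card_erase_of_mem
      (mem_univ _), Finset.card_univ, smul_eq_mul]
    have ha0 : a ≠ 0 := (Finset.mem_erase.mp ha).1
    rw [← hPN a ha0 0]
    have hfc : (univ.filter fun x => F (x + a) = F x)
        = (univ.filter fun x => F (x + a) - F x = 0) := by
      apply Finset.filter_congr
      intro x _
      simp [sub_eq_zero]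
    rw [hfc]
  -- move to ℝ
  set n : ℝ := (Fintype.card G : ℝ) with hn
  set m : ℝ := (Fintype.card H : ℝ) with hmr
  have hmne : m ≠ 0 := by positivity
  have hm1 : (1:ℝ) ≤ n := by
    have h1 : (1:ℕ) ≤ Fintype.card G := hg
    rw [hn]
    exact_mod_cast h1
  have hnn : (0:ℝ) ≤ n := by linarith
  have hsqrt : Real.sqrt n ^ 2 = n := Real.sq_sqrt hnn
  have hsumNR : ∑ b : H, (N b : ℝ) = n := by
    rw [← Nat.cast_sum, hsumN]
  have hsqR : (∑ b : H, (N b : ℝ)^2) * m = n * m + (n - 1) * n := by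
    have hc := congrArg (fun k : ℕ => (k : ℝ)) hsq
    simp only [Nat.cast_mul, Nat.cast_add, Nat.cast_sum, Nat.cast_pow,
      Nat.cast_sub (Nat.one_le_iff_ne_zero.mpr hg.ne')] at hc
    push_cast at hc
    convert hc using 2
  -- the clincher: sum of squares of deviations
  set c : ℝ := n / m - Real.sqrt n / m with hc
  have hsum0 : ∑ b : H, ((N b : ℝ) - c)^2 = n := by
    have e1 : ∀ b : H, ((N b : ℝ) - c)^2 = (N b : ℝ)^2 - 2*c*(N b : ℝ) + c^2 :=
      fun b => by ring
    rw [Finset.sum_congr rfl fun b _ => e1 b, Finset.sum_add_distrib, Finset.sum_sub_distrib,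
      ← Finset.mul_sum, Finset.sum_const, Finset.card_univ, nsmul_eq_mul, hsumNR]
    have h2 : ∑ b : H, (N b : ℝ)^2 = (n * m + (n - 1) * n) / m := by
      field_simp at hsqR ⊢; linarith
    rw [h2, hc]
    field_simp
    nlinarith [hsqrt]
  have hgα : ((N α : ℝ) - c)^2 = n := by
    have hNα : (N α : ℝ) = n / m + Real.sqrt n - Real.sqrt n / m := hα
    rw [hNα, hc]
    have : n / m + Real.sqrt n - Real.sqrt n / m - (n / m - Real.sqrt n / m)
        = Real.sqrt n := by ring
    rw [this, hsqrt]
  have herase : ∑ b ∈ univ.erase α, ((N b : ℝ) - c)^2 = 0 := by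
    rw [← Finset.add_sum_erase _ _ (mem_univ α)] at hsum0
    linarith
  have hzero : ((N β : ℝ) - c)^2 = 0 := by
    refine (Finset.sum_eq_zero_iff_of_nonneg fun b _ => sq_nonneg _).mp herase β ?_
    exact Finset.mem_erase.mpr ⟨hβ, mem_univ β⟩
  have := pow_eq_zero_iff (n := 2) (by norm_num) |>.mp hzero
  have hNβ : (N β : ℝ) = c := by
    have h2 := sub_eq_zero.mp this
    linarith
  exact hNβ
end

section
/- Let G and H be finite abelian groups and F : G → H perfect nonlinear. If some α ∈ H satisfies |F⁻¹(α)| = |G|/|H| − √|G| + √|G|/|H|, then |F⁻¹(β)| = |G|/|H| + √|G|/|H| for every β ≠ α. -/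
/-- If a preimage attains the minimal possible size, all other preimages are uniform. -/
theorem preimage_uniform_of_min_preimage
    {G H : Type*} [AddCommGroup G] [Fintype G]
    [AddCommGroup H] [Fintype H] [DecidableEq H] (F : G → H)
    (hPN : ∀ a : G, a ≠ 0 → ∀ b : H,
      (Finset.univ.filter fun x => F (x + a) - F x = b).card * Fintype.card H
        = Fintype.card G)
    (α : H)
    (hα : ((Finset.univ.filter fun x => F x = α).card : ℝ)
        = (Fintype.card G : ℝ) / (Fintype.card H : ℝ) - Real.sqrt (Fintype.card G)
          + Real.sqrt (Fintype.card G) / (Fintype.card H : ℝ)) :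
    ∀ β : H, β ≠ α →
      ((Finset.univ.filter fun x => F x = β).card : ℝ)
        = (Fintype.card G : ℝ) / (Fintype.card H : ℝ)
          + Real.sqrt (Fintype.card G) / (Fintype.card H : ℝ) := by
  classical
  set n : H → ℕ := fun b => (Finset.univ.filter fun x => F x = b).card with hn
  -- counting identities
  have hsum : ∑ b, n b = Fintype.card G := by
    rw [← Finset.card_univ]
    exact (Finset.card_eq_sum_card_fiberwise (f := F) (fun x _ => Finset.mem_univ (F x))).symm
  have hfiber : ∀ x : G, (Finset.univ.filter fun a => F (x + a) = F x).card = n (F x) := by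
    intro x
    apply Finset.card_bij' (fun a _ => x + a) (fun y _ => y - x)
    · intro a ha
      simp only [Finset.mem_filter, Finset.mem_univ, true_and] at ha ⊢
      exact ha
    · intro y hy
      simp only [Finset.mem_filter, Finset.mem_univ, true_and] at hy ⊢
      simpa using hy
    · intro a _; abel
    · intro y _; abel
  have h3 : ∑ x : G, n (F x) = ∑ b, n b ^ 2 := by
    rw [← Finset.sum_fiberwise_of_maps_to (g := F) (t := Finset.univ)
      (fun x _ => Finset.mem_univ (F x)) (fun x => n (F x))]
    refine Finset.sum_congr rfl fun b _ => ?_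
    rw [Finset.sum_congr rfl (fun x hx => by
      rw [(Finset.mem_filter.mp hx).2]), Finset.sum_const, smul_eq_mul, sq]
  have h2 : ∑ a : G, (Finset.univ.filter fun x => F (x + a) = F x).card = ∑ b, n b ^ 2 := by
    simp only [Finset.card_filter]
    rw [Finset.sum_comm, ← h3]
    refine Finset.sum_congr rfl fun x _ => ?_
    rw [← hfiber x, Finset.card_filter]
  have hS : ∀ a : G, a ≠ 0 →
      (Finset.univ.filter fun x => F (x + a) = F x).card * Fintype.card H = Fintype.card G := by
    intro a ha
    simpa [sub_eq_zero] using hPN a ha 0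
  have hsq : (∑ b, n b ^ 2) * Fintype.card H
      = Fintype.card G * Fintype.card H + (Fintype.card G - 1) * Fintype.card G := by
    rw [← h2, ← Finset.sum_erase_add _ _ (Finset.mem_univ (0 : G)), add_mul, Finset.sum_mul]
    rw [Finset.sum_congr rfl (fun a ha => hS a (Finset.mem_erase.mp ha).1), Finset.sum_const,
      smul_eq_mul, Finset.card_erase_of_mem (Finset.mem_univ _), Finset.card_univ]
    have : (Finset.univ.filter fun x => F (x + 0) = F x).card = Fintype.card G := by simp
    rw [this]; ring
  -- pass to the reals
  have hNpos : 0 < Fintype.card G := Fintype.card_pos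
  have hmpos : 0 < Fintype.card H := Fintype.card_pos
  set N : ℝ := (Fintype.card G : ℝ) with hN
  set m : ℝ := (Fintype.card H : ℝ) with hm
  have hm0 : m ≠ 0 := by positivity
  have hsumR : ∑ b, (n b : ℝ) = N := by rw [hN]; exact_mod_cast hsum
  have hsqR : (∑ b, (n b : ℝ) ^ 2) * m = N * m + (N - 1) * N := by
    rw [hN, hm]
    have := congrArg (Nat.cast : ℕ → ℝ) hsq
    push_cast [Nat.cast_sub hNpos] at this
    linarith [this]
  set s : ℝ := Real.sqrt (Fintype.card G) with hs
  have hs2 : s ^ 2 = N := Real.sq_sqrt (by positivity)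
  set c : ℝ := N / m + s / m with hc
  have hαR : (n α : ℝ) = c - s := by
    rw [hc]; rw [hα]; ring
  have key : ∑ β ∈ Finset.univ.erase α, ((n β : ℝ) - c) ^ 2 = 0 := by
    have hsplit : ∑ β ∈ Finset.univ.erase α, ((n β : ℝ) - c) ^ 2
        = (∑ b, ((n b : ℝ) - c) ^ 2) - ((n α : ℝ) - c) ^ 2 := by
      rw [← Finset.sum_erase_add _ _ (Finset.mem_univ α)]; ring
    have hexp : ∑ b, ((n b : ℝ) - c) ^ 2
        = (∑ b, (n b : ℝ) ^ 2) - 2 * c * (∑ b, (n b : ℝ)) + m * c ^ 2 := by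
      simp only [sub_sq, Finset.sum_add_distrib, Finset.sum_sub_distrib, ← Finset.mul_sum,
        ← Finset.sum_mul, Finset.sum_const, Finset.card_univ, nsmul_eq_mul, ← hm]
      ring
    rw [hsplit, hexp, hαR, hsumR]
    have hsq' : ∑ b, (n b : ℝ) ^ 2 = (N * m + (N - 1) * N) / m := by
      field_simp at hsqR ⊢; linarith [hsqR]
    rw [hsq', hc, ← hs2]
    field_simp
    ring
  intro β hβ
  have hβ' : ((n β : ℝ) - c) ^ 2 = 0 := by
    have hnonneg : ∀ b ∈ Finset.univ.erase α, (0 : ℝ) ≤ ((n b : ℝ) - c) ^ 2 :=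
      fun b _ => sq_nonneg _
    exact (Finset.sum_eq_zero_iff_of_nonneg hnonneg).mp key β
      (Finset.mem_erase.mpr ⟨hβ, Finset.mem_univ β⟩)
  have : (n β : ℝ) = c := by
    have := pow_eq_zero_iff (n := 2) (by norm_num) |>.mp hβ'
    linarith [this]
  exact this
end

section
/- Let G and H be finite abelian groups with |H| ≤ √|G|, and let F : G → H be perfect nonlinear. Then F is surjective. -/
/-- Perfect nonlinear functions with `|H| ≤ √|G|` are surjective. -/
theorem surjective_of_perfect_nonlinear_of_sq_card_le
    {G H : Type*} [AddCommGroup G] [Fintype G]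
    [AddCommGroup H] [Fintype H] [DecidableEq H] (F : G → H)
    (hPN : ∀ a : G, a ≠ 0 → ∀ b : H,
      (Finset.univ.filter fun x => F (x + a) - F x = b).card * Fintype.card H
        = Fintype.card G)
    (hcard : Fintype.card H ^ 2 ≤ Fintype.card G) :
    Function.Surjective F := by
  classical
  intro b0
  by_contra hb0
  push_neg at hb0
  set N : H → ℕ := fun c => (Finset.univ.filter fun x => F x = c).card with hN
  -- sum of fibers
  have sumN : ∑ c, N c = Fintype.card G := by
    rw [← Finset.card_univ]
    exact (Finset.card_eq_sum_card_fiberwise (fun x _ => Finset.mem_univ (F x))).symm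
  -- count of a with F (x + a) = F x equals N (F x)
  have hcount : ∀ x : G, (Finset.univ.filter fun a => F (x + a) = F x).card = N (F x) := by
    intro x
    apply Finset.card_bij (fun a _ => x + a)
    · intro a ha
      simp only [Finset.mem_filter, Finset.mem_univ, true_and] at ha ⊢
      exact ha
    · intro a _ b _ h
      exact add_left_cancel h
    · intro y hy
      simp only [Finset.mem_filter, Finset.mem_univ, true_and] at hy
      exact ⟨y - x, by simp [hy], by abel⟩
  -- sum of squares identity
  have hsq : ∑ a : G, (Finset.univ.filter fun x => F (x + a) = F x).card
      = ∑ c, N c ^ 2 := by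
    have h1 : ∀ a : G, (Finset.univ.filter fun x => F (x + a) = F x).card
        = ∑ x : G, if F (x + a) = F x then 1 else 0 := by
      intro a; rw [Finset.card_filter]
    simp_rw [h1]
    rw [Finset.sum_comm]
    have h2 : ∀ x : G, (∑ a : G, if F (x + a) = F x then 1 else 0) = N (F x) := by
      intro x; rw [← Finset.card_filter]; exact hcount x
    simp_rw [h2]
    rw [← Finset.sum_fiberwise_of_maps_to (fun x (_ : x ∈ Finset.univ) => Finset.mem_univ (F x))
      (fun x => N (F x))]
    refine Finset.sum_congr rfl fun c _ => ?_
    rw [sq]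
    rw [Finset.sum_congr rfl (fun x hx => by
      simp only [Finset.mem_filter] at hx; rw [hx.2])]
    simp [mul_comm]
    exact Or.inl rfl
  -- the main counting identity
  have key : (∑ c, N c ^ 2) * Fintype.card H
      = Fintype.card G * Fintype.card H + (Fintype.card G - 1) * Fintype.card G := by
    rw [← hsq, Finset.sum_mul]
    rw [← Finset.sum_erase_add _ _ (Finset.mem_univ (0 : G))]
    have h0 : (Finset.univ.filter fun x => F (x + (0:G)) = F x).card = Fintype.card G := by
      simp [Finset.card_univ]
    rw [h0]
    have hrest : ∀ a ∈ Finset.univ.erase (0 : G),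
        (Finset.univ.filter fun x => F (x + a) = F x).card * Fintype.card H
          = Fintype.card G := by
      intro a ha
      have ha0 : a ≠ 0 := Finset.ne_of_mem_erase ha
      have := hPN a ha0 0
      simpa [sub_eq_zero] using this
    rw [Finset.sum_congr rfl hrest, Finset.sum_const, smul_eq_mul,
      Finset.card_erase_of_mem (Finset.mem_univ _), Finset.card_univ]
    ring
  -- image of F
  set S : Finset H := Finset.univ.image F with hS
  have hNzero : ∀ c ∉ S, N c = 0 := by
    intro c hc
    rw [hN]
    simp only [Finset.card_eq_zero, Finset.filter_eq_empty_iff]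
    intro x _ h
    exact hc (h ▸ Finset.mem_image_of_mem F (Finset.mem_univ x))
  have hSsub : S ⊆ Finset.univ.erase b0 := by
    intro c hc
    rcases Finset.mem_image.mp hc with ⟨x, _, rfl⟩
    exact Finset.mem_erase.mpr ⟨fun h => hb0 x h, Finset.mem_univ _⟩
  have hH1 : 1 ≤ Fintype.card H := Fintype.card_pos
  have hk : S.card + 1 ≤ Fintype.card H := by
    have h1 := Finset.card_le_card hSsub
    have h2 : (Finset.univ.erase b0).card = Fintype.card H - 1 := by
      rw [Finset.card_erase_of_mem (Finset.mem_univ _), Finset.card_univ]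
    omega
  -- Cauchy-Schwarz over ℤ
  have hCS : ((Fintype.card G : ℤ)) ^ 2 ≤ (S.card : ℤ) * ∑ c, (N c : ℤ) ^ 2 := by
    have h1 : ∑ c ∈ S, (N c : ℤ) = ∑ c, (N c : ℤ) := by
      apply Finset.sum_subset (Finset.subset_univ S)
      intro c _ hc; rw [hNzero c hc]; simp
    have h2 : ∑ c ∈ S, (N c : ℤ) ^ 2 = ∑ c, (N c : ℤ) ^ 2 := by
      apply Finset.sum_subset (Finset.subset_univ S)
      intro c _ hc; rw [hNzero c hc]; simp
    calc ((Fintype.card G : ℤ)) ^ 2 = (∑ c ∈ S, (N c : ℤ)) ^ 2 := by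
          rw [h1, ← Nat.cast_sum, sumN]
      _ ≤ (S.card : ℤ) * ∑ c ∈ S, (N c : ℤ) ^ 2 := sq_sum_le_card_mul_sum_sq
      _ = (S.card : ℤ) * ∑ c, (N c : ℤ) ^ 2 := by rw [h2]
  -- final arithmetic
  have hG1 : 1 ≤ Fintype.card G := Fintype.card_pos
  have keyZ : (∑ c, (N c : ℤ) ^ 2) * (Fintype.card H : ℤ)
      = (Fintype.card G : ℤ) * Fintype.card H
        + ((Fintype.card G : ℤ) - 1) * Fintype.card G := by
    have := congrArg (fun n : ℕ => (n : ℤ)) key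
    push_cast [Nat.cast_sub hG1] at this
    linarith [this]
  have hkZ : (S.card : ℤ) + 1 ≤ (Fintype.card H : ℤ) := by exact_mod_cast hk
  have hcardZ : (Fintype.card H : ℤ) ^ 2 ≤ (Fintype.card G : ℤ) := by exact_mod_cast hcard
  have hG1Z : (1 : ℤ) ≤ (Fintype.card G : ℤ) := by exact_mod_cast hG1
  have hH1Z : (1 : ℤ) ≤ (Fintype.card H : ℤ) := by exact_mod_cast hH1
  have hk0 : (0 : ℤ) ≤ (S.card : ℤ) := Int.natCast_nonneg _
  have hs0 : (0 : ℤ) ≤ ∑ c, (N c : ℤ) ^ 2 := Finset.sum_nonneg fun c _ => sq_nonneg _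
  set g : ℤ := (Fintype.card G : ℤ)
  set hh : ℤ := (Fintype.card H : ℤ)
  set k : ℤ := (S.card : ℤ)
  set s : ℤ := ∑ c, (N c : ℤ) ^ 2
  -- g^2 * hh ≤ k * s * hh = k * (g*hh + (g-1)*g) ≤ (hh-1)*(g*hh + g^2 - g)
  nlinarith [mul_le_mul_of_nonneg_right hCS (by linarith : (0:ℤ) ≤ hh),
    mul_le_mul_of_nonneg_right hkZ (by nlinarith : (0:ℤ) ≤ g * hh + (g - 1) * g),
    sq_nonneg (hh - 1), mul_pos (by linarith : (0:ℤ) < g) (by nlinarith : (0:ℤ) < g)]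
end

section
/- Let G and H be finite abelian groups and F : G → H perfect nonlinear. Then the cardinality of the image of F satisfies |Im(F)| ≥ |G|·|H| / (|G| + |H| − 1). -/
/-- Lower bound on the image set size of a perfect nonlinear function. -/
theorem image_card_lower_bound_of_perfect_nonlinear
    {G H : Type*} [AddCommGroup G] [Fintype G]
    [AddCommGroup H] [Fintype H] [DecidableEq H] (F : G → H)
    (hPN : ∀ a : G, a ≠ 0 → ∀ b : H,
      (Finset.univ.filter fun x => F (x + a) - F x = b).card * Fintype.card H
        = Fintype.card G) :
    ((Finset.univ.image F).card : ℚ)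
      ≥ ((Fintype.card G : ℚ) * (Fintype.card H : ℚ))
          / ((Fintype.card G : ℚ) + (Fintype.card H : ℚ) - 1) := by
  classical
  set q := Fintype.card G with hq
  set h := Fintype.card H with hh
  set m := (Finset.univ.image F).card with hm
  set mb : H → ℕ := fun b => (Finset.univ.filter fun x => F x = b).card with hmb
  set c : G → ℕ := fun a => (Finset.univ.filter fun x => F (x + a) - F x = 0).card with hc
  have hsum : ∑ b ∈ Finset.univ.image F, mb b = q := by
    rw [hq, ← Finset.card_univ, Finset.card_eq_sum_card_image F Finset.univ]
  -- pair counting: ∑ x, mb (F x) = ∑ b in image, mb b ^ 2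
  have hN1 : ∑ x : G, mb (F x)
      = ∑ b ∈ Finset.univ.image F, mb b ^ 2 := by
    rw [← Finset.sum_fiberwise_of_maps_to
      (fun x _ => Finset.mem_image_of_mem F (Finset.mem_univ x)) (fun x => mb (F x))]
    refine Finset.sum_congr rfl fun b _ => ?_
    rw [Finset.sum_congr rfl (fun x hx => by rw [(Finset.mem_filter.mp hx).2])]
    rw [Finset.sum_const, smul_eq_mul, sq]
  -- and also = ∑ a, c a
  have hN2 : ∑ a : G, c a = ∑ x : G, mb (F x) := by
    simp only [hc, hmb, Finset.card_filter]
    rw [Finset.sum_comm]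
    refine Finset.sum_congr rfl fun x _ => ?_
    rw [← Finset.card_filter, ← Finset.card_filter]
    refine Finset.card_equiv (Equiv.addLeft x) fun a => ?_
    simp [sub_eq_zero, eq_comm]
  have hc0 : c 0 = q := by
    simp [hc, hq, Finset.card_univ]
  have hNh : (∑ a : G, c a) * h = q * h + (q - 1) * q := by
    rw [← Finset.add_sum_erase _ c (Finset.mem_univ (0 : G)), add_mul, hc0,
      Finset.sum_mul]
    congr 1
    rw [Finset.sum_congr rfl (fun a ha => hPN a (Finset.ne_of_mem_erase ha) 0),
      Finset.sum_const, smul_eq_mul, Finset.card_erase_of_mem (Finset.mem_univ _),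
      Finset.card_univ]
  have hq1 : 1 ≤ q := Fintype.card_pos
  have hh1 : 1 ≤ h := Fintype.card_pos
  -- Cauchy-Schwarz over ℚ
  have hCS : (q : ℚ) ^ 2 ≤ (m : ℚ) * ∑ b ∈ Finset.univ.image F, (mb b : ℚ) ^ 2 := by
    have := sq_sum_le_card_mul_sum_sq (s := Finset.univ.image F)
      (f := fun b => (mb b : ℚ))
    rw [← Nat.cast_sum] at this
    rw [hsum] at this
    exact this
  have hNQ : (∑ b ∈ Finset.univ.image F, (mb b : ℚ) ^ 2) * h
      = q * h + ((q : ℚ) - 1) * q := by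
    have : ((∑ a : G, c a : ℕ) : ℚ) * h = ((q * h + (q - 1) * q : ℕ) : ℚ) := by
      rw [← Nat.cast_mul, hNh]
    push_cast [hN2, hN1, Nat.cast_sub hq1] at this
    push_cast
    linarith [this]
  have hqpos : (0 : ℚ) < q := by exact_mod_cast hq1
  have hhpos : (0 : ℚ) < h := by exact_mod_cast hh1
  have hden : (0 : ℚ) < (q : ℚ) + h - 1 := by
    have : (1 : ℚ) ≤ q := by exact_mod_cast hq1
    linarith
  have hmain : (q : ℚ) * h ≤ (m : ℚ) * ((q : ℚ) + h - 1) := by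
    have h1 : (q : ℚ) ^ 2 * h ≤ (m : ℚ) * ((q : ℚ) * h + ((q : ℚ) - 1) * q) := by
      calc (q : ℚ) ^ 2 * h
          ≤ ((m : ℚ) * ∑ b ∈ Finset.univ.image F, (mb b : ℚ) ^ 2) * h := by
            apply mul_le_mul_of_nonneg_right hCS hhpos.le
        _ = (m : ℚ) * ((q : ℚ) * h + ((q : ℚ) - 1) * q) := by
            rw [mul_assoc, hNQ]
    have h2 : (q : ℚ) * ((q : ℚ) * h) ≤ (q : ℚ) * ((m : ℚ) * ((q : ℚ) + h - 1)) := by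
      ring_nf
      ring_nf at h1
      linarith
    exact le_of_mul_le_mul_left h2 hqpos
  rw [ge_iff_le, div_le_iff₀ hden]
  exact hmain
end

section
/- Let p be an odd prime and F : 𝔽_{p^n} → 𝔽_{p^n} be perfect nonlinear (i.e., planar). Then (p^n + 1)/2 ≤ |Im(F)|. -/
/-- Lower bound `(p^n+1)/2 ≤ |Im(F)|` on the image set size of a planar function. -/
theorem planar_image_card_lower_bound
    (p n : ℕ) [Fact p.Prime] (hp : Odd p) (hn : 0 < n)
    [Fintype (GaloisField p n)] [DecidableEq (GaloisField p n)]
    (F : GaloisField p n → GaloisField p n)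
    (hF : ∀ a : GaloisField p n, a ≠ 0 →
      Function.Bijective (fun x => F (x + a) - F x)) :
    p ^ n + 1 ≤ 2 * (Finset.univ.image F).card := by
  classical
  have hq : Fintype.card (GaloisField p n) = p ^ n := by
    rw [← Nat.card_eq_fintype_card]; exact GaloisField.card p n hn.ne'
  set m : GaloisField p n → ℕ := fun b => (Finset.univ.filter (fun x => F x = b)).card with hm
  have hmem : ∀ x : GaloisField p n, x ∈ Finset.univ → F x ∈ Finset.univ.image F :=
    fun x _ => Finset.mem_image_of_mem F (Finset.mem_univ x)
  have hsum : ∑ b ∈ Finset.univ.image F, m b = p ^ n := by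
    rw [← hq, ← Finset.card_univ]
    exact (Finset.card_eq_sum_card_fiberwise hmem).symm
  -- collision pairs
  set S : Finset (GaloisField p n × GaloisField p n) :=
    Finset.univ.filter (fun xy : GaloisField p n × GaloisField p n => xy.1 ≠ xy.2 ∧ F xy.1 = F xy.2) with hS
  set S' : Finset (GaloisField p n × GaloisField p n) :=
    Finset.univ.filter (fun ax : GaloisField p n × GaloisField p n => ax.1 ≠ 0 ∧ F (ax.2 + ax.1) = F ax.2) with hS'
  have hSS' : S.card = S'.card := by
    apply Finset.card_nbij' (fun xy => (xy.2 - xy.1, xy.1)) (fun ax => (ax.2, ax.2 + ax.1))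
    · intro xy hxy
      simp only [hS, Finset.mem_coe, Finset.mem_filter, Finset.mem_univ, true_and] at hxy
      simp only [hS', Finset.mem_coe, Finset.mem_filter, Finset.mem_univ, true_and]
      constructor
      · exact sub_ne_zero.mpr (Ne.symm hxy.1)
      · rw [add_sub_cancel]
        exact hxy.2.symm
    · intro ax hax
      simp only [hS', Finset.mem_coe, Finset.mem_filter, Finset.mem_univ, true_and] at hax
      simp only [hS, Finset.mem_coe, Finset.mem_filter, Finset.mem_univ, true_and]
      constructor
      · intro h
        exact hax.1 (left_eq_add.mp h)
      · exact hax.2.symm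
    · intro xy hxy
      simp only [add_sub_cancel]
    · intro ax hax
      simp only [add_sub_cancel_left]
  have hS'card : S'.card = p ^ n - 1 := by
    have hmem' : ∀ ax : GaloisField p n × GaloisField p n, ax ∈ S' → ax.1 ∈ (Finset.univ : Finset (GaloisField p n)).erase 0 := by
      intro ax hax
      simp only [hS', Finset.mem_filter, Finset.mem_univ, true_and] at hax
      exact Finset.mem_erase.mpr ⟨hax.1, Finset.mem_univ _⟩
    rw [Finset.card_eq_sum_card_fiberwise hmem']
    have h1 : ∀ a ∈ (Finset.univ : Finset (GaloisField p n)).erase 0,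
        (S'.filter (fun ax => ax.1 = a)).card = 1 := by
      intro a ha
      have ha0 : a ≠ 0 := (Finset.mem_erase.mp ha).1
      obtain ⟨x₀, hx₀, hux₀⟩ := (hF a ha0).existsUnique 0
      rw [Finset.card_eq_one]
      refine ⟨(a, x₀), ?_⟩
      ext ⟨c, y⟩
      simp only [hS', Finset.mem_filter, Finset.mem_univ, true_and, Finset.mem_singleton,
        Prod.mk.injEq]
      constructor
      · rintro ⟨⟨hc0, hy⟩, hca⟩
        subst hca
        exact ⟨rfl, hux₀ y (sub_eq_zero.mpr hy)⟩
      · rintro ⟨hca, hyx⟩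
        subst hca; subst hyx
        exact ⟨⟨ha0, sub_eq_zero.mp hx₀⟩, rfl⟩
    rw [Finset.sum_congr rfl h1, Finset.sum_const, smul_eq_mul, mul_one,
      Finset.card_erase_of_mem (Finset.mem_univ _), Finset.card_univ]
    rw [hq]
  have hmemS : ∀ xy : GaloisField p n × GaloisField p n, xy ∈ S → F xy.1 ∈ Finset.univ.image F := by
    intro xy _; exact Finset.mem_image_of_mem F (Finset.mem_univ _)
  have hfiber : ∀ b ∈ Finset.univ.image F,
      (S.filter (fun xy => F xy.1 = b)).card = m b * (m b - 1) := by
    intro b _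
    set Pb := Finset.univ.filter (fun x => F x = b) with hPb
    have heq : S.filter (fun xy => F xy.1 = b) =
        (Pb ×ˢ Pb) \ ((Pb ×ˢ Pb).filter (fun xy => xy.1 = xy.2)) := by
      ext ⟨x, y⟩
      simp only [hS, hPb, Finset.mem_filter, Finset.mem_sdiff, Finset.mem_product,
        Finset.mem_univ, true_and, not_and]
      constructor
      · rintro ⟨⟨hne, hfe⟩, hb⟩
        exact ⟨⟨hb, hfe ▸ hb⟩, fun _ => hne⟩
      · rintro ⟨⟨hb1, hb2⟩, hne⟩
        exact ⟨⟨hne ⟨hb1, hb2⟩, hb1.trans hb2.symm⟩, hb1⟩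
    rw [heq, Finset.card_sdiff_of_subset (Finset.filter_subset _ _), Finset.card_product]
    have hdiag : ((Pb ×ˢ Pb).filter (fun xy => xy.1 = xy.2)) = Pb.image (fun x => (x, x)) := by
      ext ⟨x, y⟩
      simp only [Finset.mem_filter, Finset.mem_product, Finset.mem_image, Prod.mk.injEq]
      constructor
      · rintro ⟨⟨h1, _⟩, he⟩
        exact ⟨x, h1, rfl, he⟩
      · rintro ⟨z, hz, rfl, rfl⟩
        exact ⟨⟨hz, hz⟩, rfl⟩
    rw [hdiag, Finset.card_image_of_injective _ (fun a b h => (Prod.mk.injEq _ _ _ _ ▸ h).1)]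
    have : (Pb.card : ℕ) = m b := rfl
    rw [this]
    cases m b with
    | zero => simp
    | succ k => simp [Nat.succ_sub_one, Nat.mul_succ, Nat.succ_mul]
  have hcoll : ∑ b ∈ Finset.univ.image F, m b * (m b - 1) = p ^ n - 1 := by
    rw [← Finset.sum_congr rfl hfiber, ← Finset.card_eq_sum_card_fiberwise hmemS, hSS', hS'card]
  have hm1 : ∀ b ∈ Finset.univ.image F, 1 ≤ m b := by
    intro b hb
    obtain ⟨x, _, hx⟩ := Finset.mem_image.mp hb
    exact Finset.card_pos.mpr ⟨x, Finset.mem_filter.mpr ⟨Finset.mem_univ x, hx⟩⟩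
  have hle : ∀ b ∈ Finset.univ.image F, 2 * (m b - 1) ≤ m b * (m b - 1) := by
    intro b hb
    rcases Nat.lt_or_ge (m b) 2 with h | h
    · interval_cases h' : m b <;> simp
    · exact Nat.mul_le_mul_right _ h
  have hA : ∑ b ∈ Finset.univ.image F, (m b - 1) + (Finset.univ.image F).card = p ^ n := by
    rw [← hsum, Finset.card_eq_sum_ones, ← Finset.sum_add_distrib]
    exact Finset.sum_congr rfl (fun b hb => Nat.sub_add_cancel (hm1 b hb))
  have h2A : 2 * (∑ b ∈ Finset.univ.image F, (m b - 1)) ≤ p ^ n - 1 := by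
    rw [Finset.mul_sum, ← hcoll]
    exact Finset.sum_le_sum hle
  have hq1 : 1 ≤ p ^ n := Nat.one_le_pow _ _ (Fact.out : p.Prime).pos
  omega
end

section
/- Let p be an odd prime and F : 𝔽_{p^n} → 𝔽_{p^n} a planar function satisfying F(x) = F(−x) for all x. Then F is 2-to-1: exactly one element of 𝔽_{p^n} has exactly one preimage under F, exactly (p^n − 1)/2 elements have exactly two preimages, and all other elements have no preimage. -/
/-- A planar function with `F(x) = F(−x)` is 2-to-1: exactly one element has exactly
one preimage, exactly `(p^n−1)/2` elements have exactly two preimages, and every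
element has at most two preimages (so all others have none). -/
theorem planar_even_is_two_to_one
    (p n : ℕ) [Fact p.Prime] (hp : Odd p) (hn : 0 < n)
    [Fintype (GaloisField p n)] [DecidableEq (GaloisField p n)]
    (F : GaloisField p n → GaloisField p n)
    (hF : ∀ a : GaloisField p n, a ≠ 0 →
      Function.Bijective (fun x => F (x + a) - F x))
    (heven : ∀ x : GaloisField p n, F x = F (-x)) :
    (Finset.univ.filter fun y =>
        (Finset.univ.filter fun x => F x = y).card = 1).card = 1 ∧
    2 * (Finset.univ.filter fun y =>
        (Finset.univ.filter fun x => F x = y).card = 2).card = p ^ n - 1 ∧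
    ∀ y : GaloisField p n, (Finset.univ.filter fun x => F x = y).card ≤ 2 := by
  classical
  have hprime : p.Prime := Fact.out
  -- 2 ≠ 0 in the field
  have h2 : (2 : GaloisField p n) ≠ 0 := by
    intro h
    have hd : p ∣ 2 := by
      have := (CharP.cast_eq_zero_iff (GaloisField p n) p 2).mp (by exact_mod_cast h)
      exact this
    have hp2 : p = 2 := (Nat.prime_dvd_prime_iff_eq hprime Nat.prime_two).mp hd
    rw [hp2] at hp
    exact (Nat.not_odd_iff_even.mpr even_two) hp
  have hneg : ∀ x : GaloisField p n, -x = x → x = 0 := by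
    intro x h
    have hx : x + x = 0 := by
      have h' := neg_add_cancel x
      rw [h] at h'
      exact h'
    have : (2 : GaloisField p n) * x = 0 := by rw [two_mul]; exact hx
    rcases mul_eq_zero.mp this with h' | h'
    · exact absurd h' h2
    · exact h'
  -- key: F x = F z → z = x ∨ z = -x
  have key : ∀ x z : GaloisField p n, F x = F z → z = x ∨ z = -x := by
    intro x z h
    by_cases hxz : z = x
    · exact Or.inl hxz
    · right
      have ha : z - x ≠ 0 := sub_ne_zero.mpr hxz
      have hinj := (hF (z - x) ha).injective
      have h1 : F (x + (z - x)) - F x = 0 := by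
        have : x + (z - x) = z := by ring
        rw [this, ← h, sub_self]
      have h2' : F (-z + (z - x)) - F (-z) = 0 := by
        have : -z + (z - x) = -x := by ring
        rw [this, ← heven x, ← heven z, h, sub_self]
      have hxz' : x = -z := hinj (h1.trans h2'.symm)
      rw [hxz', neg_neg]
  have fib : ∀ x : GaloisField p n,
      (Finset.univ.filter fun z => F z = F x) = {x, -x} := by
    intro x
    ext z
    simp only [Finset.mem_filter, Finset.mem_univ, true_and, Finset.mem_insert,
      Finset.mem_singleton]
    constructor
    · intro h; exact key x z h.symm
    · rintro (rfl | rfl)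
      · rfl
      · exact (heven x).symm
  -- every fiber has at most 2 elements
  have hle2 : ∀ y : GaloisField p n, (Finset.univ.filter fun x => F x = y).card ≤ 2 := by
    intro y
    by_cases hne : (Finset.univ.filter fun x => F x = y).Nonempty
    · obtain ⟨x, hx⟩ := hne
      have hFx : F x = y := (Finset.mem_filter.mp hx).2
      have : (Finset.univ.filter fun z => F z = y) = {x, -x} := by
        rw [← hFx]; exact fib x
      rw [this]
      exact (Finset.card_insert_le _ _).trans (by simp)
    · rw [Finset.not_nonempty_iff_eq_empty.mp hne]
      simp
  refine ⟨?_, ?_, hle2⟩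
  -- the set of y with exactly one preimage is {F 0}
  · have hS1 : (Finset.univ.filter fun y =>
        (Finset.univ.filter fun x => F x = y).card = 1) = {F 0} := by
      ext y
      simp only [Finset.mem_filter, Finset.mem_univ, true_and, Finset.mem_singleton]
      constructor
      · intro h
        obtain ⟨x, hx⟩ := Finset.card_eq_one.mp h
        have hxmem : x ∈ (Finset.univ.filter fun z => F z = y) := by
          rw [hx]; exact Finset.mem_singleton_self x
        have hFx : F x = y := (Finset.mem_filter.mp hxmem).2
        have hnegmem : -x ∈ (Finset.univ.filter fun z => F z = y) := by
          simp only [Finset.mem_filter, Finset.mem_univ, true_and]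
          rw [← heven x]; exact hFx
        rw [hx, Finset.mem_singleton] at hnegmem
        have : x = 0 := hneg x hnegmem
        rw [← hFx, this]
      · rintro rfl
        have : (Finset.univ.filter fun z => F z = F 0) = {0, -0} := fib 0
        rw [this]
        simp
    rw [hS1, Finset.card_singleton]
  -- counting
  · set c : GaloisField p n → ℕ := fun y => (Finset.univ.filter fun x => F x = y).card with hc
    have htotal : ∑ y : GaloisField p n, c y = p ^ n := by
      have h1 : (Finset.univ : Finset (GaloisField p n)).card =
          ∑ y : GaloisField p n, c y :=
        Finset.card_eq_sum_card_fiberwise (fun x _ => Finset.mem_univ (F x))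
      rw [← h1, Finset.card_univ, ← Nat.card_eq_fintype_card, GaloisField.card p n hn.ne']
    have hsplit : ∑ y : GaloisField p n, c y =
        (∑ y ∈ Finset.univ.filter (fun y => c y = 1), c y) +
        ∑ y ∈ Finset.univ.filter (fun y => ¬ c y = 1), c y :=
      (Finset.sum_filter_add_sum_filter_not _ _ _).symm
    have hsplit2 : ∑ y ∈ Finset.univ.filter (fun y => ¬ c y = 1), c y =
        (∑ y ∈ (Finset.univ.filter (fun y => ¬ c y = 1)).filter (fun y => c y = 2), c y) +
        ∑ y ∈ (Finset.univ.filter (fun y => ¬ c y = 1)).filter (fun y => ¬ c y = 2), c y :=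
      (Finset.sum_filter_add_sum_filter_not _ _ _).symm
    have hzero : ∑ y ∈ (Finset.univ.filter (fun y => ¬ c y = 1)).filter
        (fun y => ¬ c y = 2), c y = 0 := by
      apply Finset.sum_eq_zero
      intro y hy
      simp only [Finset.mem_filter, Finset.mem_univ, true_and] at hy
      have h1 := hle2 y
      have h2' : c y = (Finset.univ.filter fun x => F x = y).card := rfl
      omega
    have hone : ∑ y ∈ Finset.univ.filter (fun y => c y = 1), c y =
        (Finset.univ.filter (fun y => c y = 1)).card := by
      rw [Finset.card_eq_sum_ones]
      apply Finset.sum_congr rfl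
      intro y hy
      exact (Finset.mem_filter.mp hy).2
    have htwo : ∑ y ∈ (Finset.univ.filter (fun y => ¬ c y = 1)).filter
        (fun y => c y = 2), c y =
        2 * (Finset.univ.filter (fun y => c y = 2)).card := by
      have heq : (Finset.univ.filter (fun y => ¬ c y = 1)).filter (fun y => c y = 2) =
          Finset.univ.filter (fun y => c y = 2) := by
        ext y
        simp only [Finset.mem_filter, Finset.mem_univ, true_and]
        omega
      rw [heq, Finset.card_eq_sum_ones, Finset.mul_sum]
      apply Finset.sum_congr rfl
      intro y hy
      have := (Finset.mem_filter.mp hy).2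
      omega
    have hS1card : (Finset.univ.filter (fun y => c y = 1)).card = 1 := by
      have hS1 : (Finset.univ.filter fun y => c y = 1) = {F 0} := by
        ext y
        simp only [Finset.mem_filter, Finset.mem_univ, true_and, Finset.mem_singleton, hc]
        constructor
        · intro h
          obtain ⟨x, hx⟩ := Finset.card_eq_one.mp h
          have hxmem : x ∈ (Finset.univ.filter fun z => F z = y) := by
            rw [hx]; exact Finset.mem_singleton_self x
          have hFx : F x = y := (Finset.mem_filter.mp hxmem).2
          have hnegmem : -x ∈ (Finset.univ.filter fun z => F z = y) := by
            simp only [Finset.mem_filter, Finset.mem_univ, true_and]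
            rw [← heven x]; exact hFx
          rw [hx, Finset.mem_singleton] at hnegmem
          have : x = 0 := hneg x hnegmem
          rw [← hFx, this]
        · rintro rfl
          rw [fib 0]
          simp
      rw [hS1, Finset.card_singleton]
    have hm : p ^ n = 1 + 2 * (Finset.univ.filter (fun y => c y = 2)).card := by
      rw [← htotal, hsplit, hsplit2, hzero, hone, htwo, hS1card]; omega
    have hfin : 2 * (Finset.univ.filter (fun y => c y = 2)).card = p ^ n - 1 := by omega
    exact hfin
end

section
/- Let p be an odd prime and F : 𝔽_{p^n} → 𝔽_{p^n} be a planar function. Then |Im(F)| ≤ p^n − (√(4p^n − 3) − 1)/2. -/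
open Finset

/-- Upper bound on the image set size of a planar function. -/
theorem planar_image_card_upper_bound
    (p n : ℕ) [Fact p.Prime] (hp : Odd p) (hn : 0 < n)
    [Fintype (GaloisField p n)] [DecidableEq (GaloisField p n)]
    (F : GaloisField p n → GaloisField p n)
    (hF : ∀ a : GaloisField p n, a ≠ 0 →
      Function.Bijective (fun x => F (x + a) - F x)) :
    ((Finset.univ.image F).card : ℝ)
      ≤ (p : ℝ) ^ n - (Real.sqrt (4 * (p : ℝ) ^ n - 3) - 1) / 2 := by
  classical
  set q := Fintype.card (GaloisField p n) with hqdef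
  have hq : q = p ^ n := by
    rw [hqdef, ← Nat.card_eq_fintype_card]; exact GaloisField.card p n hn.ne'
  set I := Finset.univ.image F with hI
  set k := I.card with hk
  set m : GaloisField p n → ℕ := fun v => (Finset.univ.filter (fun x => F x = v)).card with hm
  -- each fiber over the image is nonempty
  have hm1 : ∀ v ∈ I, 1 ≤ m v := by
    intro v hv
    rw [hI, Finset.mem_image] at hv
    obtain ⟨x, -, hx⟩ := hv
    have : x ∈ Finset.univ.filter (fun x => F x = v) := by simp [hx]
    exact Finset.card_pos.mpr ⟨x, this⟩
  -- sum of fiber sizes is q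
  have hsum1 : ∑ v ∈ I, m v = q := by
    rw [hqdef, ← Finset.card_univ]
    exact (Finset.card_eq_sum_card_fiberwise
      (fun x _ => Finset.mem_image_of_mem F (Finset.mem_univ x))).symm
  -- the set of pairs with equal values
  set T : Finset (GaloisField p n × GaloisField p n) :=
    Finset.univ.filter (fun p => F p.1 = F p.2) with hT
  -- first count: sum of m v ^ 2
  have hT1 : T.card = ∑ v ∈ I, m v * m v := by
    rw [Finset.card_eq_sum_card_fiberwise
      (f := fun p : GaloisField p n × GaloisField p n => F p.1) (t := I)
      (fun x _ => Finset.mem_image_of_mem F (Finset.mem_univ x.1))]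
    refine Finset.sum_congr rfl fun v hv => ?_
    have : T.filter (fun p : GaloisField p n × GaloisField p n => F p.1 = v)
        = (Finset.univ.filter (fun x => F x = v)) ×ˢ (Finset.univ.filter (fun x => F x = v)) := by
      ext ⟨x, y⟩
      simp only [hT, Finset.mem_filter, Finset.mem_univ, true_and, Finset.mem_product]
      constructor
      · rintro ⟨h1, h2⟩; exact ⟨h2, h1 ▸ h2⟩
      · rintro ⟨h1, h2⟩; exact ⟨h1.trans h2.symm, h1⟩
    rw [this, Finset.card_product]
  -- second count: via differences
  have hfib : ∀ a : GaloisField p n,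
      (T.filter (fun p : GaloisField p n × GaloisField p n => p.2 - p.1 = a)).card
      = (Finset.univ.filter (fun x : GaloisField p n => F (x + a) = F x)).card := by
    intro a
    apply Finset.card_bij' (fun (p : GaloisField p n × GaloisField p n) _ => p.1)
      (fun x _ => (x, x + a))
    · rintro ⟨x, y⟩ hxy
      simp only [hT, Finset.mem_filter, Finset.mem_univ, true_and] at hxy ⊢
      obtain ⟨h1, h2⟩ := hxy
      have hy : y = x + a := by rw [← h2]; ring
      rw [← hy, h1]
    · intro x hx
      simp only [Finset.mem_filter, Finset.mem_univ, true_and] at hx ⊢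
      refine ⟨?_, by ring⟩
      simp only [hT, Finset.mem_filter, Finset.mem_univ, true_and]
      exact hx.symm
    · rintro ⟨x, y⟩ hxy
      simp only [hT, Finset.mem_filter, Finset.mem_univ, true_and] at hxy
      have hy : y = x + a := by rw [← hxy.2]; ring
      simp [hy]
    · intro x hx; rfl
  have hT2 : T.card = q + (q - 1) := by
    rw [Finset.card_eq_sum_card_fiberwise
      (f := fun p : GaloisField p n × GaloisField p n => p.2 - p.1)
      (t := Finset.univ) (fun x _ => Finset.mem_univ _)]
    rw [← Finset.add_sum_erase _ _ (Finset.mem_univ (0 : GaloisField p n))]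
    have h0 : (T.filter (fun p : GaloisField p n × GaloisField p n => p.2 - p.1 = 0)).card = q := by
      rw [hfib 0]
      simp [hqdef]
    have h1 : ∀ a ∈ Finset.univ.erase (0 : GaloisField p n),
        (T.filter (fun p : GaloisField p n × GaloisField p n => p.2 - p.1 = a)).card = 1 := by
      intro a ha
      have ha0 : a ≠ 0 := Finset.ne_of_mem_erase ha
      rw [hfib a]
      obtain ⟨x₀, hx₀, hun⟩ := (hF a ha0).existsUnique 0
      rw [Finset.card_eq_one]
      refine ⟨x₀, ?_⟩
      ext x
      simp only [Finset.mem_filter, Finset.mem_univ, true_and, Finset.mem_singleton]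
      constructor
      · intro h
        exact hun x (by simp [sub_eq_zero, h])
      · rintro rfl
        have := hx₀
        simp only [sub_eq_zero] at this
        exact this
    rw [Finset.sum_congr rfl h1, Finset.sum_const, smul_eq_mul, mul_one, h0,
      Finset.card_erase_of_mem (Finset.mem_univ _), Finset.card_univ]
  -- combine the two counts
  have hkey : ∑ v ∈ I, m v * m v = q + (q - 1) := by rw [← hT1, hT2]
  set d := ∑ v ∈ I, (m v - 1) with hd
  have hdk : d + k = q := by
    rw [← hsum1, hd, hk, Finset.card_eq_sum_ones, ← Finset.sum_add_distrib]
    exact Finset.sum_congr rfl fun v hv => by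
      have := hm1 v hv; omega
  have hs2 : ∑ v ∈ I, m v * m v
      = ∑ v ∈ I, ((m v - 1) * (m v - 1) + 2 * (m v - 1) + 1) :=
    Finset.sum_congr rfl fun v hv => by
      obtain ⟨a, ha⟩ : ∃ a, m v = a + 1 := ⟨m v - 1, by have := hm1 v hv; omega⟩
      simp only [ha, Nat.add_sub_cancel]
      ring
  have hkey2 : ∑ v ∈ I, (m v - 1) * (m v - 1) + 2 * d + k = q + (q - 1) := by
    rw [← hkey, hs2, Finset.sum_add_distrib, Finset.sum_add_distrib, ← Finset.mul_sum,
      Finset.sum_const, smul_eq_mul, mul_one, ← hd, ← hk]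
  have hs2le : ∑ v ∈ I, (m v - 1) * (m v - 1) ≤ d * d := by
    calc ∑ v ∈ I, (m v - 1) * (m v - 1) ≤ ∑ v ∈ I, (m v - 1) * d := by
          refine Finset.sum_le_sum fun v hv => ?_
          exact Nat.mul_le_mul_left _ (Finset.single_le_sum (f := fun v => m v - 1) (fun i _ => Nat.zero_le _) hv)
      _ = d * d := by rw [← Finset.sum_mul]
  have hq1 : 1 ≤ q := Fintype.card_pos
  have hmain : q ≤ d * d + d + 1 := by omega
  -- pass to the reals
  have hdkR : (k : ℝ) = (q : ℝ) - (d : ℝ) := by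
    have := hdk; push_cast [← this]; ring
  have hqR : (q : ℝ) = (p : ℝ) ^ n := by rw [hq]; push_cast; ring
  have hmainR : (q : ℝ) ≤ (d : ℝ) * d + d + 1 := by exact_mod_cast hmain
  have hsqrt : Real.sqrt (4 * (p : ℝ) ^ n - 3) ≤ 2 * (d : ℝ) + 1 := by
    have h1 : 4 * (p : ℝ) ^ n - 3 ≤ (2 * (d : ℝ) + 1) ^ 2 := by
      rw [← hqR]; nlinarith
    calc Real.sqrt (4 * (p : ℝ) ^ n - 3) ≤ Real.sqrt ((2 * (d : ℝ) + 1) ^ 2) :=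
          Real.sqrt_le_sqrt h1
      _ = 2 * (d : ℝ) + 1 := Real.sqrt_sq (by positivity)
  rw [hdkR, hqR]
  linarith
end

section
/- Let p be an odd prime and F : 𝔽_{p^n} → 𝔽_{p^n} a planar function. If |Im(F)| = (p^n + 1)/2, then F is 2-to-1: one element has exactly one preimage and (p^n − 1)/2 elements have exactly two preimages. -/
/-- A planar function with image set of minimal size `(p^n+1)/2` is 2-to-1. -/
theorem planar_min_image_is_two_to_one
    (p n : ℕ) [Fact p.Prime] (hp : Odd p) (hn : 0 < n)
    [Fintype (GaloisField p n)] [DecidableEq (GaloisField p n)]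
    (F : GaloisField p n → GaloisField p n)
    (hF : ∀ a : GaloisField p n, a ≠ 0 →
      Function.Bijective (fun x => F (x + a) - F x))
    (hIm : 2 * (Finset.univ.image F).card = p ^ n + 1) :
    (Finset.univ.filter fun y =>
        (Finset.univ.filter fun x => F x = y).card = 1).card = 1 ∧
    2 * (Finset.univ.filter fun y =>
        (Finset.univ.filter fun x => F x = y).card = 2).card = p ^ n - 1 ∧
    ∀ y : GaloisField p n, (Finset.univ.filter fun x => F x = y).card ≤ 2 := by
  set q := p ^ n with hqdef
  have hq1 : 1 ≤ q := Nat.one_le_iff_ne_zero.mpr (pow_ne_zero n (Fact.out (p := p.Prime)).pos.ne')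
  have hcard : Fintype.card (GaloisField p n) = q := by
    rw [← Nat.card_eq_fintype_card]; exact GaloisField.card p n hn.ne'
  set I : Finset (GaloisField p n) := Finset.univ.image F with hIdef
  set m : GaloisField p n → ℕ :=
    fun y => (Finset.univ.filter fun x => F x = y).card with hmdef
  -- membership in image ↔ nonempty fiber
  have hmemI : ∀ y : GaloisField p n, y ∈ I ↔ 0 < m y := by
    intro y
    rw [hmdef]
    simp only [Finset.card_pos]
    constructor
    · intro hy
      obtain ⟨x, -, hx⟩ := Finset.mem_image.mp hy
      exact ⟨x, by simp [hx]⟩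
    · rintro ⟨x, hx⟩
      simp only [Finset.mem_filter] at hx
      exact Finset.mem_image.mpr ⟨x, Finset.mem_univ x, hx.2⟩
  have h1 : ∀ y ∈ I, 1 ≤ m y := fun y hy => (hmemI y).mp hy
  -- Step A : total count
  have hsum : ∑ y ∈ I, m y = q := by
    rw [← hcard, ← Finset.card_univ]
    exact (Finset.card_eq_sum_card_image F Finset.univ).symm
  -- Step B : counting collinear pairs via planarity
  have key : ∀ a : GaloisField p n, a ≠ 0 → ∃! x, F (x + a) = F x := by
    intro a ha
    obtain ⟨x, hx, hux⟩ := (hF a ha).existsUnique 0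
    exact ⟨x, sub_eq_zero.mp hx, fun y hy => hux y (by simp [sub_eq_zero.mpr hy])⟩
  choose c hc hu using key
  set P : Finset (GaloisField p n × GaloisField p n) :=
    (Finset.univ ×ˢ Finset.univ).filter (fun z => F z.1 = F z.2 ∧ z.1 ≠ z.2) with hPdef
  have hPcard : P.card = q - 1 := by
    have hbij : P.card = (Finset.univ.erase (0 : GaloisField p n)).card := by
      refine Finset.card_bij' (fun z _ => z.2 - z.1)
        (fun a ha => (c a (Finset.ne_of_mem_erase ha),
          c a (Finset.ne_of_mem_erase ha) + a)) ?_ ?_ ?_ ?_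
      · intro z hz
        simp only [hPdef, Finset.mem_filter] at hz
        exact Finset.mem_erase.mpr ⟨sub_ne_zero.mpr (Ne.symm hz.2.2), Finset.mem_univ _⟩
      · intro a ha
        have ha' := Finset.ne_of_mem_erase ha
        simp only [hPdef, Finset.mem_filter]
        refine ⟨Finset.mem_product.mpr ⟨Finset.mem_univ _, Finset.mem_univ _⟩,
          (hc a ha').symm, ?_⟩
        intro h
        exact ha' (by linear_combination -h)
      · rintro ⟨z1, z2⟩ hz
        simp only [hPdef, Finset.mem_filter] at hz
        have ha : z2 - z1 ≠ 0 := sub_ne_zero.mpr (Ne.symm hz.2.2)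
        have hz1 : F (z1 + (z2 - z1)) = F z1 := by
          rw [add_sub_cancel]; exact hz.2.1.symm
        have hcz : c (z2 - z1) ha = z1 := (hu (z2 - z1) ha z1 hz1).symm
        show (c (z2 - z1) ha, c (z2 - z1) ha + (z2 - z1)) = (z1, z2)
        rw [hcz, Prod.mk.injEq]
        exact ⟨rfl, by ring⟩
      · intro a ha
        simp
    rw [hbij, Finset.card_erase_of_mem (Finset.mem_univ _), Finset.card_univ, hcard]
  have hP1 : P.card = ∑ y ∈ I, m y * (m y - 1) := by
    have hmap : ∀ z ∈ P, F z.1 ∈ I := fun z _ =>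
      Finset.mem_image.mpr ⟨z.1, Finset.mem_univ _, rfl⟩
    rw [Finset.card_eq_sum_card_fiberwise hmap]
    refine Finset.sum_congr rfl fun y hy => ?_
    have hfib : P.filter (fun z => F z.1 = y)
        = (Finset.univ.filter fun x => F x = y).offDiag := by
      ext z
      simp only [hPdef, Finset.mem_filter, Finset.mem_offDiag, Finset.mem_product,
        Finset.mem_univ, true_and, and_true]
      constructor
      · rintro ⟨⟨heq, hne⟩, hfst⟩
        exact ⟨hfst, heq ▸ hfst, hne⟩
      · rintro ⟨hfst, hsnd, hne⟩
        exact ⟨⟨hfst.trans hsnd.symm, hne⟩, hfst⟩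
    rw [hfib, Finset.offDiag_card, hmdef, Nat.mul_sub, mul_one]
  have hsum2 : ∑ y ∈ I, m y * (m y - 1) = q - 1 := hP1 ▸ hPcard
  -- the integer argument: every fiber in the image has size 1 or 2
  have htwo : ∀ y ∈ I, m y = 1 ∨ m y = 2 := by
    have hnn : ∀ y ∈ I, (0 : ℤ) ≤ ((m y : ℤ) - 1) * ((m y : ℤ) - 2) := by
      intro y hy
      rcases le_or_gt (m y) 1 with h | h
      · have h1' : ((m y : ℤ)) ≤ 1 := by exact_mod_cast h
        nlinarith
      · have h2' : (2 : ℤ) ≤ (m y : ℤ) := by exact_mod_cast h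
        nlinarith
    have e1 : ∑ y ∈ I, (m y : ℤ) = (q : ℤ) := by exact_mod_cast hsum
    have e2 : ∑ y ∈ I, (m y : ℤ) * ((m y : ℤ) - 1) = (q : ℤ) - 1 := by
      have hterm : ∀ y ∈ I, (m y : ℤ) * ((m y : ℤ) - 1) = ((m y * (m y - 1) : ℕ) : ℤ) := by
        intro y hy
        rw [Nat.cast_mul, Nat.cast_sub (h1 y hy)]
        push_cast
        ring
      rw [Finset.sum_congr rfl hterm, ← Nat.cast_sum, hsum2, Nat.cast_sub hq1]
      simp
    have e3 : 2 * (I.card : ℤ) = (q : ℤ) + 1 := by exact_mod_cast hIm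
    have hzero : ∑ y ∈ I, ((m y : ℤ) - 1) * ((m y : ℤ) - 2) = 0 := by
      have hterm : ∀ y ∈ I,
          ((m y : ℤ) - 1) * ((m y : ℤ) - 2)
            = (m y : ℤ) * ((m y : ℤ) - 1) - 2 * (m y : ℤ) + 2 := fun y _ => by ring
      rw [Finset.sum_congr rfl hterm, Finset.sum_add_distrib, Finset.sum_sub_distrib,
        ← Finset.mul_sum, e1, e2, Finset.sum_const, nsmul_eq_mul]
      linarith
    intro y hy
    have hzy := (Finset.sum_eq_zero_iff_of_nonneg hnn).mp hzero y hy
    rcases mul_eq_zero.mp hzy with h | h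
    · left; exact_mod_cast sub_eq_zero.mp h
    · right; exact_mod_cast sub_eq_zero.mp h
  -- endgame counting
  set I1 : Finset (GaloisField p n) := I.filter (fun y => m y = 1) with hI1def
  set I2 : Finset (GaloisField p n) := I.filter (fun y => m y = 2) with hI2def
  have hdisj : Disjoint I1 I2 := by
    rw [Finset.disjoint_left]
    intro y hy1 hy2
    rw [hI1def, Finset.mem_filter] at hy1
    rw [hI2def, Finset.mem_filter] at hy2
    omega
  have hunion : I1 ∪ I2 = I := by
    ext y
    simp only [hI1def, hI2def, Finset.mem_union, Finset.mem_filter]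
    constructor
    · rintro (⟨h, -⟩ | ⟨h, -⟩) <;> exact h
    · intro hy
      rcases htwo y hy with h | h
      · exact Or.inl ⟨hy, h⟩
      · exact Or.inr ⟨hy, h⟩
  have hs1 : ∑ y ∈ I1, m y = I1.card := by
    rw [Finset.card_eq_sum_ones]
    exact Finset.sum_congr rfl fun y hy => (Finset.mem_filter.mp hy).2
  have hs2 : ∑ y ∈ I2, m y = 2 * I2.card := by
    rw [Finset.sum_congr rfl fun y hy => (Finset.mem_filter.mp hy).2,
      Finset.sum_const, smul_eq_mul, mul_comm]
  have hcount : I1.card + 2 * I2.card = q := by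
    rw [← hs1, ← hs2, ← Finset.sum_union hdisj, hunion, hsum]
  have hIc : I1.card + I2.card = I.card := by
    rw [← Finset.card_union_of_disjoint hdisj, hunion]
  -- identify the goal filters with I1, I2
  have hg1 : Finset.univ.filter (fun y => m y = 1) = I1 := by
    ext y
    simp only [hI1def, Finset.mem_filter, Finset.mem_univ, true_and]
    exact ⟨fun h => ⟨(hmemI y).mpr (by omega), h⟩, fun h => h.2⟩
  have hg2 : Finset.univ.filter (fun y => m y = 2) = I2 := by
    ext y
    simp only [hI2def, Finset.mem_filter, Finset.mem_univ, true_and]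
    exact ⟨fun h => ⟨(hmemI y).mpr (by omega), h⟩, fun h => h.2⟩
  refine ⟨?_, ?_, ?_⟩
  · show (Finset.univ.filter fun y => m y = 1).card = 1
    rw [hg1]; omega
  · show 2 * (Finset.univ.filter fun y => m y = 2).card = q - 1
    rw [hg2]; omega
  · intro y
    show m y ≤ 2
    by_cases hy : y ∈ I
    · rcases htwo y hy with h | h <;> omega
    · have h0 : m y = 0 := by
        by_contra h
        exact hy ((hmemI y).mpr (Nat.pos_of_ne_zero h))
      omega
end

section
/- Let F₁ : 𝔽_p^n → 𝔽_p^m and F₂ : 𝔽_p^k → 𝔽_p^m be perfect nonlinear functions, both almost balanced of type (+), i.e., there exist a₁ with |F₁⁻¹(a₁)| = p^{n−m} + p^{n/2} − p^{n/2−m} and |F₁⁻¹(a)| = p^{n−m} − p^{n/2−m} for all a ≠ a₁, and similarly a₂ for F₂ (with k in place of n). Then the direct sum F(x,y) = F₁(x) + F₂(y) satisfies |F⁻¹(a₁ + a₂)| = p^{n+k−m} + p^{(n+k)/2} − p^{(n+k)/2−m}. -/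
/-- The direct sum of two almost balanced perfect nonlinear functions of type (+)
has the unique preimage size of type (+). -/
theorem direct_sum_plus_plus
    (p n k m : ℕ) [Fact p.Prime]
    (hn : Even n) (hk : Even k) (hmn : m ≤ n / 2) (hmk : m ≤ k / 2)
    (F₁ : (Fin n → ZMod p) → (Fin m → ZMod p))
    (F₂ : (Fin k → ZMod p) → (Fin m → ZMod p))
    (hPN1 : ∀ a : Fin n → ZMod p, a ≠ 0 → ∀ b : Fin m → ZMod p,
      (Finset.univ.filter fun x => F₁ (x + a) - F₁ x = b).card * p ^ m = p ^ n)
    (hPN2 : ∀ a : Fin k → ZMod p, a ≠ 0 → ∀ b : Fin m → ZMod p,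
      (Finset.univ.filter fun y => F₂ (y + a) - F₂ y = b).card * p ^ m = p ^ k)
    (a₁ a₂ : Fin m → ZMod p)
    (h₁u : ((Finset.univ.filter fun x => F₁ x = a₁).card : ℤ)
        = p ^ (n - m) + p ^ (n / 2) - p ^ (n / 2 - m))
    (h₁ : ∀ a : Fin m → ZMod p, a ≠ a₁ →
      ((Finset.univ.filter fun x => F₁ x = a).card : ℤ)
        = p ^ (n - m) - p ^ (n / 2 - m))
    (h₂u : ((Finset.univ.filter fun y => F₂ y = a₂).card : ℤ)
        = p ^ (k - m) + p ^ (k / 2) - p ^ (k / 2 - m))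
    (h₂ : ∀ a : Fin m → ZMod p, a ≠ a₂ →
      ((Finset.univ.filter fun y => F₂ y = a).card : ℤ)
        = p ^ (k - m) - p ^ (k / 2 - m)) :
    ((Finset.univ.filter fun z : (Fin n → ZMod p) × (Fin k → ZMod p) =>
        F₁ z.1 + F₂ z.2 = a₁ + a₂).card : ℤ)
      = p ^ (n + k - m) + p ^ ((n + k) / 2) - p ^ ((n + k) / 2 - m) := by
  classical
  obtain ⟨a, ha⟩ := hn
  obtain ⟨b, hb⟩ := hk
  -- convolution formula
  have key : (Finset.univ.filter fun z : (Fin n → ZMod p) × (Fin k → ZMod p) =>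
        F₁ z.1 + F₂ z.2 = a₁ + a₂).card
      = ∑ c : Fin m → ZMod p,
        (Finset.univ.filter fun x => F₁ x = c).card *
        (Finset.univ.filter fun y => F₂ y = a₁ + a₂ - c).card := by
    rw [Finset.card_eq_sum_card_fiberwise
      (f := fun z : (Fin n → ZMod p) × (Fin k → ZMod p) => F₁ z.1)
      (t := Finset.univ) (fun _ _ => Finset.mem_univ _)]
    refine Finset.sum_congr rfl fun c _ => ?_
    rw [← Finset.card_product]
    congr 1
    ext z
    simp only [Finset.mem_filter, Finset.mem_univ, true_and, Finset.mem_product]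
    constructor
    · rintro ⟨h1, h2⟩
      exact ⟨h2, by rw [← h2]; exact eq_sub_of_add_eq' h1⟩
    · rintro ⟨h1, h2⟩
      refine ⟨?_, h1⟩
      rw [h1, h2]; ring
  have hcast : ((Finset.univ.filter fun z : (Fin n → ZMod p) × (Fin k → ZMod p) =>
        F₁ z.1 + F₂ z.2 = a₁ + a₂).card : ℤ)
      = ∑ c : Fin m → ZMod p,
        ((Finset.univ.filter fun x => F₁ x = c).card : ℤ) *
        ((Finset.univ.filter fun y => F₂ y = a₁ + a₂ - c).card : ℤ) := by
    exact_mod_cast congrArg (Nat.cast : ℕ → ℤ) key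
  rw [hcast]
  -- split off the term c = a₁
  rw [← Finset.add_sum_erase _ _ (Finset.mem_univ a₁)]
  have hA2 : a₁ + a₂ - a₁ = a₂ := by ring
  rw [hA2, h₁u, h₂u]
  have hterm : ∀ c ∈ Finset.univ.erase a₁,
      ((Finset.univ.filter fun x => F₁ x = c).card : ℤ) *
      ((Finset.univ.filter fun y => F₂ y = a₁ + a₂ - c).card : ℤ)
      = ((p : ℤ) ^ (n - m) - (p : ℤ) ^ (n / 2 - m)) *
        ((p : ℤ) ^ (k - m) - (p : ℤ) ^ (k / 2 - m)) := by
    intro c hc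
    have hc1 : c ≠ a₁ := Finset.ne_of_mem_erase hc
    have hc2 : a₁ + a₂ - c ≠ a₂ := by
      intro h
      apply hc1
      have h' : a₁ + a₂ - c + c = a₂ + c := by rw [h]
      have h'' : a₁ + a₂ = a₂ + c := by rwa [sub_add_cancel] at h'
      calc c = a₁ + a₂ - a₂ := by rw [h'']; ring
        _ = a₁ := by ring
    rw [h₁ c hc1, h₂ _ hc2]
  have hcard : Fintype.card (Fin m → ZMod p) = p ^ m := by simp [ZMod.card]
  have hle : 1 ≤ p ^ m := Nat.one_le_pow _ _ (Fact.out (p := p.Prime)).pos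
  have hrest : ∑ c ∈ Finset.univ.erase a₁,
      ((Finset.univ.filter fun x => F₁ x = c).card : ℤ) *
      ((Finset.univ.filter fun y => F₂ y = a₁ + a₂ - c).card : ℤ)
      = ((p : ℤ) ^ m - 1) *
        (((p : ℤ) ^ (n - m) - (p : ℤ) ^ (n / 2 - m)) *
         ((p : ℤ) ^ (k - m) - (p : ℤ) ^ (k / 2 - m))) := by
    rw [Finset.sum_congr rfl hterm, Finset.sum_const,
      Finset.card_erase_of_mem (Finset.mem_univ a₁), Finset.card_univ, hcard, nsmul_eq_mul]
    push_cast [hle]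
    ring
  rw [hrest]
  -- now pure integer exponent arithmetic
  have e1 : (p : ℤ) ^ (n / 2) = (p : ℤ) ^ m * (p : ℤ) ^ (n / 2 - m) := by
    rw [← pow_add]; congr 1; omega
  have e2 : (p : ℤ) ^ (k / 2) = (p : ℤ) ^ m * (p : ℤ) ^ (k / 2 - m) := by
    rw [← pow_add]; congr 1; omega
  have e3 : (p : ℤ) ^ (n + k - m)
      = (p : ℤ) ^ m * ((p : ℤ) ^ (n - m) * (p : ℤ) ^ (k - m)) := by
    rw [← pow_add, ← pow_add]; congr 1; omega
  have e4 : (p : ℤ) ^ ((n + k) / 2)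
      = (p : ℤ) ^ m * ((p : ℤ) ^ m * ((p : ℤ) ^ (n / 2 - m) * (p : ℤ) ^ (k / 2 - m))) := by
    rw [← pow_add, ← pow_add, ← pow_add]; congr 1; omega
  have e5 : (p : ℤ) ^ ((n + k) / 2 - m)
      = (p : ℤ) ^ m * ((p : ℤ) ^ (n / 2 - m) * (p : ℤ) ^ (k / 2 - m)) := by
    rw [← pow_add, ← pow_add]; congr 1; omega
  rw [e1, e2, e3, e4, e5]
  ring
end

section
/- Let F₁ : 𝔽_p^n → 𝔽_p^m and F₂ : 𝔽_p^k → 𝔽_p^m be functions, both almost balanced of type (−), i.e., there exist a₁ with |F₁⁻¹(a₁)| = p^{n−m} − p^{n/2} + p^{n/2−m} and |F₁⁻¹(a)| = p^{n−m} + p^{n/2−m} for all a ≠ a₁, and similarly a₂ for F₂ (with k in place of n). Then the direct sum F(x,y) = F₁(x) + F₂(y) satisfies |F⁻¹(a₁ + a₂)| = p^{n+k−m} + p^{(n+k)/2} − p^{(n+k)/2−m}. -/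
private lemma alg_aux (P : ℤ) (m e f : ℕ) :
    (P ^ (m + e + e) - P ^ (m + e) + P ^ e) * (P ^ (m + f + f) - P ^ (m + f) + P ^ f)
      + (P ^ m - 1) * ((P ^ (m + e + e) + P ^ e) * (P ^ (m + f + f) + P ^ f))
    = P ^ (m + m + m + e + e + f + f) + P ^ (m + m + e + f) - P ^ (m + e + f) := by
  ring

/-- The direct sum of two almost balanced functions of type (−) has the unique
preimage size of type (+). -/
theorem direct_sum_minus_minus
    (p n k m : ℕ) [Fact p.Prime]
    (hn : Even n) (hk : Even k) (hmn : m ≤ n / 2) (hmk : m ≤ k / 2)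
    (F₁ : (Fin n → ZMod p) → (Fin m → ZMod p))
    (F₂ : (Fin k → ZMod p) → (Fin m → ZMod p))
    (a₁ a₂ : Fin m → ZMod p)
    (h₁u : ((Finset.univ.filter fun x => F₁ x = a₁).card : ℤ)
        = p ^ (n - m) - p ^ (n / 2) + p ^ (n / 2 - m))
    (h₁ : ∀ a : Fin m → ZMod p, a ≠ a₁ →
      ((Finset.univ.filter fun x => F₁ x = a).card : ℤ)
        = p ^ (n - m) + p ^ (n / 2 - m))
    (h₂u : ((Finset.univ.filter fun y => F₂ y = a₂).card : ℤ)
        = p ^ (k - m) - p ^ (k / 2) + p ^ (k / 2 - m))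
    (h₂ : ∀ a : Fin m → ZMod p, a ≠ a₂ →
      ((Finset.univ.filter fun y => F₂ y = a).card : ℤ)
        = p ^ (k - m) + p ^ (k / 2 - m)) :
    ((Finset.univ.filter fun z : (Fin n → ZMod p) × (Fin k → ZMod p) =>
        F₁ z.1 + F₂ z.2 = a₁ + a₂).card : ℤ)
      = p ^ (n + k - m) + p ^ ((n + k) / 2) - p ^ ((n + k) / 2 - m) := by
  classical
  set c := a₁ + a₂ with hc
  -- convolution formula
  have key : (Finset.univ.filter fun z : (Fin n → ZMod p) × (Fin k → ZMod p) =>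
        F₁ z.1 + F₂ z.2 = c).card
      = ∑ a : Fin m → ZMod p,
          (Finset.univ.filter fun x => F₁ x = a).card
            * (Finset.univ.filter fun y => F₂ y = c - a).card := by
    have step1 : (Finset.univ.filter fun z : (Fin n → ZMod p) × (Fin k → ZMod p) =>
          F₁ z.1 + F₂ z.2 = c).card
        = ∑ x : Fin n → ZMod p,
            (Finset.univ.filter fun y => F₂ y = c - F₁ x).card := by
      rw [Finset.card_filter, Fintype.sum_prod_type]
      refine Finset.sum_congr rfl fun x _ => ?_
      rw [Finset.card_filter]
      refine Finset.sum_congr rfl fun y _ => ?_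
      congr 1
      simp [eq_sub_iff_add_eq, add_comm]
    rw [step1, ← Finset.sum_fiberwise Finset.univ F₁
      (fun x => (Finset.univ.filter fun y => F₂ y = c - F₁ x).card)]
    refine Finset.sum_congr rfl fun a _ => ?_
    have : ∀ x ∈ Finset.univ.filter fun x => F₁ x = a,
        (Finset.univ.filter fun y => F₂ y = c - F₁ x).card
          = (Finset.univ.filter fun y => F₂ y = c - a).card := by
      intro x hx
      rw [Finset.mem_filter] at hx
      rw [hx.2]
    rw [Finset.sum_congr rfl this, Finset.sum_const, smul_eq_mul]
  rw [key]
  push_cast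
  -- split off the a₁ term
  rw [← Finset.sum_erase_add _ _ (Finset.mem_univ a₁)]
  have hterm : ∀ a ∈ Finset.univ.erase a₁,
      ((Finset.univ.filter fun x => F₁ x = a).card : ℤ)
        * ((Finset.univ.filter fun y => F₂ y = c - a).card : ℤ)
      = ((p : ℤ) ^ (n - m) + (p : ℤ) ^ (n / 2 - m))
          * ((p : ℤ) ^ (k - m) + (p : ℤ) ^ (k / 2 - m)) := by
    intro a ha
    have hane : a ≠ a₁ := Finset.ne_of_mem_erase ha
    have hbne : c - a ≠ a₂ := by
      intro h
      apply hane
      have : a = c - a₂ := by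
        rw [← h]; ring
      rw [this, hc]; ring
    rw [h₁ a hane, h₂ _ hbne]
  rw [Finset.sum_congr rfl hterm, Finset.sum_const, nsmul_eq_mul]
  have hcard : ((Finset.univ.erase a₁).card : ℤ) = (p : ℤ) ^ m - 1 := by
    rw [Finset.card_erase_of_mem (Finset.mem_univ a₁), Finset.card_univ]
    have : Fintype.card (Fin m → ZMod p) = p ^ m := by
      simp [ZMod.card]
    rw [this]
    have hp : 1 ≤ p ^ m := Nat.one_le_pow _ _ (Fact.out : p.Prime).pos
    push_cast [Nat.cast_sub hp]
    ring
  have hc2 : c - a₁ = a₂ := by rw [hc]; ring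
  rw [hcard, hc2, h₁u, h₂u]
  -- now pure arithmetic
  obtain ⟨e', he'⟩ := hn
  obtain ⟨f', hf'⟩ := hk
  have hn2 : n / 2 = e' := by omega
  have hk2 : k / 2 = f' := by omega
  have hme : m ≤ e' := by omega
  have hmf : m ≤ f' := by omega
  set e := e' - m with he
  set f := f' - m with hf
  have h1 : n - m = m + e + e := by omega
  have h2 : n / 2 = m + e := by omega
  have h3 : n / 2 - m = e := by omega
  have h4 : k - m = m + f + f := by omega
  have h5 : k / 2 = m + f := by omega
  have h6 : k / 2 - m = f := by omega
  have h7 : n + k - m = m + m + m + e + e + f + f := by omega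
  have h8 : (n + k) / 2 = m + m + e + f := by omega
  have h9 : (n + k) / 2 - m = m + e + f := by omega
  rw [h7, h9, h8, h1, h3, h2, h4, h6, h5]
  have := alg_aux (p : ℤ) m e f
  linarith [this]
end

section
/- Let G and H be finite abelian groups with |G| = 2^n (n even, n ≥ 4) and |H| = 4, and let F : G → H be perfect nonlinear. Then the value distribution of F is one of exactly two possibilities: three fibers of size 2^{n−2} + 2^{n/2−2} and one fiber of size 2^{n−2} − 3·2^{n/2−2}, or three fibers of size 2^{n−2} − 2^{n/2−2} and one fiber of size 2^{n−2} + 3·2^{n/2−2}. -/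
set_option maxHeartbeats 1000000

private lemma sqlist : ∀ a ∈ Finset.Icc (-3:ℤ) 3, ∀ b ∈ Finset.Icc (-3:ℤ) 3,
    ∀ c ∈ Finset.Icc (-3:ℤ) 3, ∀ d ∈ Finset.Icc (-3:ℤ) 3,
    a + b + c + d = 0 → a*a + b*b + c*c + d*d = 12 →
    (a = -3 ∧ b = 1 ∧ c = 1 ∧ d = 1) ∨ (b = -3 ∧ a = 1 ∧ c = 1 ∧ d = 1) ∨
    (c = -3 ∧ a = 1 ∧ b = 1 ∧ d = 1) ∨ (d = -3 ∧ a = 1 ∧ b = 1 ∧ c = 1) ∨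
    (a = 3 ∧ b = -1 ∧ c = -1 ∧ d = -1) ∨ (b = 3 ∧ a = -1 ∧ c = -1 ∧ d = -1) ∨
    (c = 3 ∧ a = -1 ∧ b = -1 ∧ d = -1) ∨ (d = 3 ∧ a = -1 ∧ b = -1 ∧ c = -1) := by decide

private lemma sq_mod8 (x : ℤ) : ∃ y : ℤ,
    (x % 2 = 0 ∧ (x^2 = 8*y ∨ x^2 = 8*y + 4)) ∨ (x % 2 = 1 ∧ x^2 = 8*y + 1) := by
  obtain ⟨u, hu⟩ | ⟨u, hu⟩ := Int.even_or_odd x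
  · obtain ⟨v, hv⟩ | ⟨v, hv⟩ := Int.even_or_odd u
    · exact ⟨2*v^2, Or.inl ⟨by omega, Or.inl (by subst hu hv; ring)⟩⟩
    · exact ⟨2*v^2 + 2*v, Or.inl ⟨by omega, Or.inr (by subst hu hv; ring)⟩⟩
  · obtain ⟨w, hw⟩ := Int.even_mul_succ_self u
    refine ⟨w, Or.inr ⟨by omega, ?_⟩⟩
    subst hu; linear_combination 4*hw

private lemma even_of_sum_sq {a b c d : ℤ} (h : (8:ℤ) ∣ a^2 + b^2 + c^2 + d^2) :
    2 ∣ a ∧ 2 ∣ b ∧ 2 ∣ c ∧ 2 ∣ d := by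
  obtain ⟨ya, ha⟩ := sq_mod8 a
  obtain ⟨yb, hb⟩ := sq_mod8 b
  obtain ⟨yc, hc⟩ := sq_mod8 c
  obtain ⟨yd, hd⟩ := sq_mod8 d
  rcases ha with ⟨pa, qa | qa⟩ | ⟨pa, qa⟩ <;>
  rcases hb with ⟨pb, qb | qb⟩ | ⟨pb, qb⟩ <;>
  rcases hc with ⟨pc, qc | qc⟩ | ⟨pc, qc⟩ <;>
  rcases hd with ⟨pd, qd | qd⟩ | ⟨pd, qd⟩ <;>
  rw [qa, qb, qc, qd] at h <;> omega

private lemma key : ∀ m : ℕ, 1 ≤ m → ∀ a b c d : ℤ,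
    a + b + c + d = 0 → a^2 + b^2 + c^2 + d^2 = 3 * 4^m →
    ∃ ε : ℤ, (ε = 1 ∨ ε = -1) ∧
    ((a = -3*ε*2^(m-1) ∧ b = ε*2^(m-1) ∧ c = ε*2^(m-1) ∧ d = ε*2^(m-1)) ∨
     (b = -3*ε*2^(m-1) ∧ a = ε*2^(m-1) ∧ c = ε*2^(m-1) ∧ d = ε*2^(m-1)) ∨
     (c = -3*ε*2^(m-1) ∧ a = ε*2^(m-1) ∧ b = ε*2^(m-1) ∧ d = ε*2^(m-1)) ∨
     (d = -3*ε*2^(m-1) ∧ a = ε*2^(m-1) ∧ b = ε*2^(m-1) ∧ c = ε*2^(m-1))) := by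
  intro m hm
  induction m, hm using Nat.le_induction with
  | base =>
    intro a b c d h0 h2
    have hp0 : (2:ℤ)^(1-1) = 1 := by norm_num
    rw [hp0]
    norm_num at h2
    have sqa : a^2 ≤ 12 := by nlinarith [sq_nonneg b, sq_nonneg c, sq_nonneg d]
    have sqb : b^2 ≤ 12 := by nlinarith [sq_nonneg a, sq_nonneg c, sq_nonneg d]
    have sqc : c^2 ≤ 12 := by nlinarith [sq_nonneg a, sq_nonneg b, sq_nonneg d]
    have sqd : d^2 ≤ 12 := by nlinarith [sq_nonneg a, sq_nonneg b, sq_nonneg c]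
    have bd : ∀ x : ℤ, x^2 ≤ 12 → x ∈ Finset.Icc (-3:ℤ) 3 := by
      intro x hx
      simp only [Finset.mem_Icc]
      constructor <;> nlinarith
    have := sqlist a (bd a sqa) b (bd b sqb) c (bd c sqc) d (bd d sqd) h0
      (by nlinarith [h2])
    rcases this with h|h|h|h|h|h|h|h <;>
      [ refine ⟨1, Or.inl rfl, ?_⟩; refine ⟨1, Or.inl rfl, ?_⟩; refine ⟨1, Or.inl rfl, ?_⟩;
        refine ⟨1, Or.inl rfl, ?_⟩; refine ⟨-1, Or.inr rfl, ?_⟩; refine ⟨-1, Or.inr rfl, ?_⟩;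
        refine ⟨-1, Or.inr rfl, ?_⟩; refine ⟨-1, Or.inr rfl, ?_⟩ ] <;> omega
  | succ k hk ih =>
    intro a b c d h0 h2
    have hdvd : (8:ℤ) ∣ a^2 + b^2 + c^2 + d^2 := by
      rw [h2]
      refine ⟨6 * 4^(k-1), ?_⟩
      have : 4^(k+1) = 4 * (4 * 4^(k-1) : ℤ) := by
        rw [← pow_succ', ← pow_succ']
        congr 1
        omega
      rw [this]; ring
    obtain ⟨⟨a', rfl⟩, ⟨b', rfl⟩, ⟨c', rfl⟩, ⟨d', rfl⟩⟩ := even_of_sum_sq hdvd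
    obtain ⟨ε, hε, hpat⟩ := ih a' b' c' d' (by linarith)
      (by have h2' : 4*(a'^2+b'^2+c'^2+d'^2) = 4*(3*4^k) := by linear_combination h2
          linarith)
    have hp : (2:ℤ) * 2^(k-1) = 2^k := by
      rw [← pow_succ']; congr 1; omega
    refine ⟨ε, hε, ?_⟩
    have hk1 : k + 1 - 1 = k := by omega
    rw [hk1]
    rcases hpat with ⟨e1,e2,e3,e4⟩|⟨e1,e2,e3,e4⟩|⟨e1,e2,e3,e4⟩|⟨e1,e2,e3,e4⟩
    · exact Or.inl ⟨by linear_combination 2*e1 - 3*ε*hp, by linear_combination 2*e2 + ε*hp,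
        by linear_combination 2*e3 + ε*hp, by linear_combination 2*e4 + ε*hp⟩
    · exact Or.inr (Or.inl ⟨by linear_combination 2*e1 - 3*ε*hp, by linear_combination 2*e2 + ε*hp,
        by linear_combination 2*e3 + ε*hp, by linear_combination 2*e4 + ε*hp⟩)
    · exact Or.inr (Or.inr (Or.inl ⟨by linear_combination 2*e1 - 3*ε*hp, by linear_combination 2*e2 + ε*hp,
        by linear_combination 2*e3 + ε*hp, by linear_combination 2*e4 + ε*hp⟩))
    · exact Or.inr (Or.inr (Or.inr ⟨by linear_combination 2*e1 - 3*ε*hp, by linear_combination 2*e2 + ε*hp,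
        by linear_combination 2*e3 + ε*hp, by linear_combination 2*e4 + ε*hp⟩))

/-- A perfect nonlinear function from a group of order `2^n` to a group of order 4
has one of exactly the two extremal value distributions. -/
theorem value_distribution_card_four
    {G H : Type*} [AddCommGroup G] [Fintype G]
    [AddCommGroup H] [Fintype H] [DecidableEq H] (F : G → H)
    (n : ℕ) (hn : Even n) (hn4 : 4 ≤ n)
    (hG : Fintype.card G = 2 ^ n) (hH : Fintype.card H = 4)
    (hPN : ∀ a : G, a ≠ 0 → ∀ b : H,
      (Finset.univ.filter fun x => F (x + a) - F x = b).card * Fintype.card H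
        = Fintype.card G) :
    ∃ ε : ℤ, (ε = 1 ∨ ε = -1) ∧ ∃ α : H,
      ((Finset.univ.filter fun x => F x = α).card : ℤ)
          = 2 ^ (n - 2) - 3 * ε * 2 ^ (n / 2 - 2) ∧
      ∀ β : H, β ≠ α →
        ((Finset.univ.filter fun x => F x = β).card : ℤ)
          = 2 ^ (n - 2) + ε * 2 ^ (n / 2 - 2) := by
  classical
  obtain ⟨m, hm, hnm⟩ : ∃ m : ℕ, 1 ≤ m ∧ n = 2*m + 2 := by
    obtain ⟨k, hk⟩ := hn
    exact ⟨n/2 - 1, by omega, by omega⟩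
  set Nf : H → ℕ := fun b => (Finset.univ.filter fun x => F x = b).card with hNf
  -- the two counting identities
  have sum1 : ∑ b : H, Nf b = 2^n := by
    rw [← hG, ← Finset.card_univ]
    exact (Finset.card_eq_sum_card_fiberwise (fun x _ => Finset.mem_univ (F x))).symm
  have e1 : (Finset.univ.filter (fun p : G × G => F p.1 = F p.2)).card
      = ∑ b : H, Nf b * Nf b := by
    rw [Finset.card_eq_sum_card_fiberwise (f := fun p : G × G => F p.1) (t := Finset.univ)
      (fun x _ => Finset.mem_univ _)]
    refine Finset.sum_congr rfl fun b _ => ?_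
    have e : Finset.filter (fun p : G × G => F p.1 = b)
          (Finset.univ.filter (fun p : G × G => F p.1 = F p.2))
        = Finset.filter (fun p : G × G => F p.1 = b ∧ F p.2 = b) Finset.univ := by
      ext p
      simp only [Finset.mem_filter, Finset.mem_univ, true_and]
      constructor
      · rintro ⟨hp, h1⟩; exact ⟨h1, hp ▸ h1⟩
      · rintro ⟨h1, h2⟩; exact ⟨h1.trans h2.symm, h1⟩
    rw [e, ← Finset.univ_product_univ,
      Finset.filter_product (fun x : G => F x = b) (fun x : G => F x = b), Finset.card_product]
  have e2 : (Finset.univ.filter (fun p : G × G => F p.1 = F p.2)).card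
      = ∑ a : G, (Finset.univ.filter fun x : G => F (x + a) = F x).card := by
    rw [Finset.card_eq_sum_card_fiberwise (f := fun p : G × G => p.1 - p.2) (t := Finset.univ)
      (fun x _ => Finset.mem_univ _)]
    refine Finset.sum_congr rfl fun a _ => ?_
    refine Finset.card_bij' (fun p _ => p.2) (fun x _ => (x + a, x)) ?_ ?_ ?_ ?_
    · intro p hp
      simp only [Finset.mem_filter, Finset.mem_univ, true_and] at hp ⊢
      obtain ⟨h1, h2⟩ := hp
      have hp1 : p.2 + a = p.1 := by rw [← h2]; abel
      rw [hp1]; exact h1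
    · intro x hx
      simp only [Finset.mem_filter, Finset.mem_univ, true_and] at hx ⊢
      exact ⟨hx, by abel⟩
    · intro p hp
      simp only [Finset.mem_filter, Finset.mem_univ, true_and] at hp
      have : p.2 + a = p.1 := by rw [← hp.2]; abel
      exact Prod.ext this rfl
    · intro x hx; rfl
  have sum2 : ∑ b : H, Nf b * Nf b = 2^n + (2^n - 1) * 2^(n-2) := by
    rw [← e1, e2, ← Finset.sum_erase_add _ _ (Finset.mem_univ (0:G))]
    have hz : (Finset.univ.filter fun x : G => F (x + 0) = F x) = Finset.univ := by
      simp
    rw [hz, Finset.card_univ, hG]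
    have he : ∀ a ∈ Finset.univ.erase (0:G),
        (Finset.univ.filter fun x : G => F (x + a) = F x).card = 2^(n-2) := by
      intro a ha
      have ha0 : a ≠ 0 := (Finset.mem_erase.mp ha).1
      have hp := hPN a ha0 0
      rw [hH, hG] at hp
      have hfil : (Finset.univ.filter fun x : G => F (x+a) - F x = 0)
          = (Finset.univ.filter fun x : G => F (x + a) = F x) := by
        apply Finset.filter_congr
        intro x _
        simp [sub_eq_zero]
      rw [hfil] at hp
      have h2n : 2^n = 2^(n-2) * 4 := by
        rw [show n = (n-2) + 2 from by omega, pow_add]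
        norm_num
      omega
    rw [Finset.sum_congr rfl he, Finset.sum_const,
      Finset.card_erase_of_mem (Finset.mem_univ 0), Finset.card_univ, hG, smul_eq_mul]
    ring
  -- enumerate the four elements of H
  have hHne : Nonempty H := Fintype.card_pos_iff.mp (by omega)
  obtain ⟨h1⟩ := hHne
  have hcard : ((Finset.univ : Finset H).erase h1).card = 3 := by
    rw [Finset.card_erase_of_mem (Finset.mem_univ h1), Finset.card_univ, hH]
  obtain ⟨h2, h3, h4, ne23, ne24, ne34, hset⟩ := Finset.card_eq_three.mp hcard
  have ne12 : h1 ≠ h2 := by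
    have : h2 ∈ (Finset.univ : Finset H).erase h1 := by
      rw [hset]; exact Finset.mem_insert_self _ _
    exact fun h => (Finset.mem_erase.mp this).1 h.symm
  have ne13 : h1 ≠ h3 := by
    have : h3 ∈ (Finset.univ : Finset H).erase h1 := by
      rw [hset]; simp
    exact fun h => (Finset.mem_erase.mp this).1 h.symm
  have ne14 : h1 ≠ h4 := by
    have : h4 ∈ (Finset.univ : Finset H).erase h1 := by
      rw [hset]; simp
    exact fun h => (Finset.mem_erase.mp this).1 h.symm
  have huniv : (Finset.univ : Finset H) = {h1, h2, h3, h4} := by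
    rw [show ({h1, h2, h3, h4} : Finset H) = insert h1 {h2, h3, h4} from rfl, ← hset,
      Finset.insert_erase (Finset.mem_univ h1)]
  have hcover : ∀ β : H, β = h1 ∨ β = h2 ∨ β = h3 ∨ β = h4 := by
    intro β
    have := Finset.mem_univ β
    rw [huniv] at this
    simpa using this
  have sum4 : ∀ f : H → ℕ, ∑ b : H, f b = f h1 + f h2 + f h3 + f h4 := by
    intro f
    rw [huniv, Finset.sum_insert (by simp [ne12, ne13, ne14]),
      Finset.sum_insert (by simp [ne23, ne24]), Finset.sum_insert (by simp [ne34]),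
      Finset.sum_singleton]
    ring
  -- integer versions
  have c1 : (2:ℤ)^n = 4*4^m := by
    rw [hnm, pow_add, pow_mul]; norm_num [mul_comm]
  have c2 : (2:ℤ)^(n-2) = 4^m := by
    rw [show n - 2 = 2*m from by omega, pow_mul]; norm_num
  have E1 := sum1
  rw [sum4 Nf] at E1
  have E2 := sum2
  rw [sum4 (fun b => Nf b * Nf b)] at E2
  have E1z : (Nf h1 : ℤ) + Nf h2 + Nf h3 + Nf h4 = 4*4^m := by
    have := congrArg (Nat.cast : ℕ → ℤ) E1
    push_cast at this
    rw [c1] at this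
    linarith
  have E2z : (Nf h1 : ℤ)*(Nf h1) + (Nf h2)*(Nf h2) + (Nf h3)*(Nf h3) + (Nf h4)*(Nf h4)
      = 4*4^m + (4*4^m - 1)*4^m := by
    have hone : (1:ℕ) ≤ 2^n := Nat.one_le_two_pow
    have := congrArg (Nat.cast : ℕ → ℤ) E2
    push_cast [Nat.cast_sub hone] at this
    rw [c1, c2] at this
    linarith
  obtain ⟨ε, hε, hpat⟩ := key m hm ((Nf h1 : ℤ) - 4^m) ((Nf h2 : ℤ) - 4^m)
    ((Nf h3 : ℤ) - 4^m) ((Nf h4 : ℤ) - 4^m)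
    (by linarith) (by linear_combination E2z - 2*(4:ℤ)^m*E1z)
  rw [show n - 2 = 2*m from by omega, show n/2 - 2 = m - 1 from by omega]
  have h2m : (2:ℤ)^(2*m) = 4^m := by rw [pow_mul]; norm_num
  refine ⟨ε, hε, ?_⟩
  have main : ∀ w x y z : H, (∀ β : H, β = w ∨ β = x ∨ β = y ∨ β = z) →
      (Nf w : ℤ) - 4^m = -3*ε*2^(m-1) → (Nf x : ℤ) - 4^m = ε*2^(m-1) →
      (Nf y : ℤ) - 4^m = ε*2^(m-1) → (Nf z : ℤ) - 4^m = ε*2^(m-1) →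
      ∃ α : H, ((Finset.univ.filter fun t => F t = α).card : ℤ) = 2^(2*m) - 3*ε*2^(m-1) ∧
        ∀ β : H, β ≠ α →
          ((Finset.univ.filter fun t => F t = β).card : ℤ) = 2^(2*m) + ε*2^(m-1) := by
    intro w x y z hcov ew ex ey ez
    refine ⟨w, by rw [h2m]; show (Nf w : ℤ) = _; linarith, ?_⟩
    intro β hβ
    rcases hcov β with rfl | rfl | rfl | rfl
    · exact absurd rfl hβ
    · rw [h2m]; show (Nf β : ℤ) = _; linarith
    · rw [h2m]; show (Nf β : ℤ) = _; linarith
    · rw [h2m]; show (Nf β : ℤ) = _; linarith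
  rcases hpat with ⟨p1,p2,p3,p4⟩|⟨p1,p2,p3,p4⟩|⟨p1,p2,p3,p4⟩|⟨p1,p2,p3,p4⟩
  · exact main h1 h2 h3 h4 hcover p1 p2 p3 p4
  · exact main h2 h1 h3 h4 (by intro β; rcases hcover β with h|h|h|h <;> tauto) p1 p2 p3 p4
  · exact main h3 h1 h2 h4 (by intro β; rcases hcover β with h|h|h|h <;> tauto) p1 p2 p3 p4
  · exact main h4 h1 h2 h3 (by intro β; rcases hcover β with h|h|h|h <;> tauto) p1 p2 p3 p4
end

section
/- Let n be even. The only integer solutions (up to permutation and overall sign) of the system H₁² + H₂² + H₃² + H₄² = 3·2^{n−2} and H₁ + H₂ + H₃ + H₄ = 0 are H₁ = H₂ = H₃ = 2^{n/2−2}, H₄ = −3·2^{n/2−2}, for n ≥ 4. -/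
/-- Base case: solutions of `a²+b²+c²+d²=12`, `a+b+c+d=0`. -/
lemma base12 (a b c d : ℤ) (h2 : a ^ 2 + b ^ 2 + c ^ 2 + d ^ 2 = 12)
    (h1 : a + b + c + d = 0) :
    (a = 1 ∧ b = 1 ∧ c = 1 ∧ d = -3) ∨ (a = 1 ∧ b = 1 ∧ c = -3 ∧ d = 1) ∨
    (a = 1 ∧ b = -3 ∧ c = 1 ∧ d = 1) ∨ (a = -3 ∧ b = 1 ∧ c = 1 ∧ d = 1) ∨
    (a = -1 ∧ b = -1 ∧ c = -1 ∧ d = 3) ∨ (a = -1 ∧ b = -1 ∧ c = 3 ∧ d = -1) ∨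
    (a = -1 ∧ b = 3 ∧ c = -1 ∧ d = -1) ∨ (a = 3 ∧ b = -1 ∧ c = -1 ∧ d = -1) := by
  have hd : d = -(a + b + c) := by omega
  subst hd
  have ha : a ^ 2 ≤ 12 := by nlinarith [sq_nonneg b, sq_nonneg c, sq_nonneg (a+b+c)]
  have hb : b ^ 2 ≤ 12 := by nlinarith [sq_nonneg a, sq_nonneg c, sq_nonneg (a+b+c)]
  have hc : c ^ 2 ≤ 12 := by nlinarith [sq_nonneg a, sq_nonneg b, sq_nonneg (a+b+c)]
  have ha' : -3 ≤ a ∧ a ≤ 3 := by constructor <;> nlinarith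
  have hb' : -3 ≤ b ∧ b ≤ 3 := by constructor <;> nlinarith
  have hc' : -3 ≤ c ∧ c ≤ 3 := by constructor <;> nlinarith
  obtain ⟨ha1, ha2⟩ := ha'; obtain ⟨hb1, hb2⟩ := hb'; obtain ⟨hc1, hc2⟩ := hc'
  interval_cases a <;> interval_cases b <;> interval_cases c <;> revert h2 <;> decide

/-- If a sum of four squares is divisible by 8, all four are even. -/
lemma all_even (a b c d : ℤ) (h : (8 : ℤ) ∣ a ^ 2 + b ^ 2 + c ^ 2 + d ^ 2) :
    2 ∣ a ∧ 2 ∣ b ∧ 2 ∣ c ∧ 2 ∣ d := by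
  have h8 : ((a : ZMod 8) ^ 2 + (b : ZMod 8) ^ 2 + (c : ZMod 8) ^ 2 + (d : ZMod 8) ^ 2) = 0 := by
    have := (ZMod.intCast_zmod_eq_zero_iff_dvd _ 8).2 h
    push_cast at this
    exact this
  have key : ∀ x y z w : ZMod 8, x ^ 2 + y ^ 2 + z ^ 2 + w ^ 2 = 0 →
      (ZMod.castHom (by norm_num : (2:ℕ) ∣ 8) (ZMod 2) x = 0 ∧
       ZMod.castHom (by norm_num : (2:ℕ) ∣ 8) (ZMod 2) y = 0 ∧
       ZMod.castHom (by norm_num : (2:ℕ) ∣ 8) (ZMod 2) z = 0 ∧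
       ZMod.castHom (by norm_num : (2:ℕ) ∣ 8) (ZMod 2) w = 0) := by decide
  obtain ⟨h1, h2, h3, h4⟩ := key _ _ _ _ h8
  have e : ∀ x : ℤ, ZMod.castHom (by norm_num : (2:ℕ) ∣ 8) (ZMod 2) (x : ZMod 8) = 0 → (2:ℤ) ∣ x := by
    intro x hx
    rw [map_intCast] at hx
    exact_mod_cast (ZMod.intCast_zmod_eq_zero_iff_dvd x 2).1 hx
  exact ⟨e a h1, e b h2, e c h3, e d h4⟩

lemma key_lemma : ∀ m : ℕ, ∀ H : Fin 4 → ℤ,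
    (∑ i, H i ^ 2 = 3 * 2 ^ (2 * m + 2)) → (∑ i, H i = 0) →
    ∃ ε : ℤ, (ε = 1 ∨ ε = -1) ∧ ∃ j : Fin 4,
      H j = -ε * 3 * 2 ^ m ∧ ∀ i : Fin 4, i ≠ j → H i = ε * 2 ^ m := by
  intro m
  induction m with
  | zero =>
    intro H hsq hsum
    rw [Fin.sum_univ_four] at hsq hsum
    norm_num at hsq
    rcases base12 _ _ _ _ hsq hsum with h|h|h|h|h|h|h|h
    · exact ⟨1, Or.inl rfl, 3, by simpa using h.2.2.2,
        fun i hi => by fin_cases i <;> simp_all⟩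
    · exact ⟨1, Or.inl rfl, 2, by simpa using h.2.2.1,
        fun i hi => by fin_cases i <;> simp_all⟩
    · exact ⟨1, Or.inl rfl, 1, by simpa using h.2.1,
        fun i hi => by fin_cases i <;> simp_all⟩
    · exact ⟨1, Or.inl rfl, 0, by simpa using h.1,
        fun i hi => by fin_cases i <;> simp_all⟩
    · exact ⟨-1, Or.inr rfl, 3, by simpa using h.2.2.2,
        fun i hi => by fin_cases i <;> simp_all⟩
    · exact ⟨-1, Or.inr rfl, 2, by simpa using h.2.2.1,
        fun i hi => by fin_cases i <;> simp_all⟩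
    · exact ⟨-1, Or.inr rfl, 1, by simpa using h.2.1,
        fun i hi => by fin_cases i <;> simp_all⟩
    · exact ⟨-1, Or.inr rfl, 0, by simpa using h.1,
        fun i hi => by fin_cases i <;> simp_all⟩
  | succ m ih =>
    intro H hsq hsum
    rw [Fin.sum_univ_four] at hsq hsum
    have hdvd : (8 : ℤ) ∣ H 0 ^ 2 + H 1 ^ 2 + H 2 ^ 2 + H 3 ^ 2 := by
      rw [hsq]
      have : 3 * (2:ℤ) ^ (2 * (m + 1) + 2) = 8 * (3 * 2 ^ (2 * m + 1)) := by
        rw [show 2 * (m + 1) + 2 = (2 * m + 1) + 3 by ring]; ring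
      rw [this]; exact Dvd.intro _ rfl
    obtain ⟨h0, h1, h2, h3⟩ := all_even _ _ _ _ hdvd
    have heven : ∀ i : Fin 4, ∃ g, H i = 2 * g := by
      intro i; fin_cases i; exacts [h0, h1, h2, h3]
    choose G hG using heven
    have hp : (3:ℤ) * 2 ^ (2 * (m + 1) + 2) = 4 * (3 * 2 ^ (2 * m + 2)) := by
      rw [show 2 * (m + 1) + 2 = (2 * m + 2) + 2 by ring]; ring
    rw [hG 0, hG 1, hG 2, hG 3, hp] at hsq
    have hsq' : ∑ i, G i ^ 2 = 3 * 2 ^ (2 * m + 2) := by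
      rw [Fin.sum_univ_four]; nlinarith [hsq]
    have hsum' : ∑ i, G i = 0 := by
      rw [Fin.sum_univ_four]
      have e0 := hG 0; have e1 := hG 1; have e2 := hG 2; have e3 := hG 3
      omega
    obtain ⟨ε, hε, j, hj, hrest⟩ := ih G hsq' hsum'
    refine ⟨ε, hε, j, ?_, ?_⟩
    · rw [hG j, hj]; ring
    · intro i hi; rw [hG i, hrest i hi]; ring

/-- The only integer solutions, up to permutation and overall sign, of
`H₁²+H₂²+H₃²+H₄² = 3·2^{n−2}`, `H₁+H₂+H₃+H₄ = 0` (n even, n ≥ 4) are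
three entries `±2^{n/2−2}` and one entry `∓3·2^{n/2−2}`. -/
theorem diophantine_solutions_card_four
    (n : ℕ) (hn : Even n) (hn4 : 4 ≤ n) (H : Fin 4 → ℤ)
    (hsq : ∑ i, H i ^ 2 = 3 * 2 ^ (n - 2))
    (hsum : ∑ i, H i = 0) :
    ∃ ε : ℤ, (ε = 1 ∨ ε = -1) ∧ ∃ j : Fin 4,
      H j = -ε * 3 * 2 ^ (n / 2 - 2) ∧
      ∀ i : Fin 4, i ≠ j → H i = ε * 2 ^ (n / 2 - 2) := by
  obtain ⟨k, hk⟩ := hn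
  have hm : n - 2 = 2 * (n / 2 - 2) + 2 := by omega
  rw [hm] at hsq
  exact key_lemma (n / 2 - 2) H hsq hsum
end
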